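/- arXiv:2403.09151 — 5 statements merged into one kernel-verified Lean document; each statement's English description precedes it below -/
import Mathlib

section
/- For every x⁰ ∈ X_M and every control u, the SEIR trajectory satisfies x(t; x⁰, u) ∈ X_M for all t ≥ 0; moreover x₂(t) → 0 and x₃(t) → 0 as t → ∞, and x₁(t) converges to a limit x₁^∞ with 0 ≤ x₁^∞ ≤ γ_nom/β_nom. -/
open MeasureTheory Set Filter Topology
open scoped ENNReal

noncomputable section

/-- interval integrability from ae-measurability + boundedness on `Ioc 0 T`. -/
private lemma II_of_bdd (w : ℝ → ℝ) (T : ℝ) (hT : 0 ≤ T)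
    (hm : AEMeasurable w (volume.restrict (Ioc 0 T)))
    (hbd : ∃ C, ∀ s ∈ Ioc (0:ℝ) T, |w s| ≤ C) : IntervalIntegrable w volume 0 T := by
  obtain ⟨C, hC⟩ := hbd
  rw [intervalIntegrable_iff, uIoc_of_le hT]
  refine Integrable.mono' (g := fun _ => C)
    (integrableOn_const measure_Ioc_lt_top.ne) hm.aestronglyMeasurable ?_
  exact (ae_restrict_iff' measurableSet_Ioc).2 (ae_of_all _ fun s hs => by
    simpa [Real.norm_eq_abs] using hC s hs)

private lemma seg_int (g : ℝ → ℝ) (hgi : ∀ T : ℝ, 0 ≤ T → IntervalIntegrable g volume 0 T)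
    {s t : ℝ} (hs : 0 ≤ s) (hst : s ≤ t) : IntervalIntegrable g volume s t := by
  refine (hgi t (hs.trans hst)).mono_set ?_
  rw [uIcc_of_le hst, uIcc_of_le (hs.trans hst)]
  exact Icc_subset_Icc hs le_rfl

private lemma seg_eq (f g : ℝ → ℝ) (hgi : ∀ T : ℝ, 0 ≤ T → IntervalIntegrable g volume 0 T)
    (hfg : ∀ t : ℝ, 0 ≤ t → f t = f 0 + ∫ r in (0:ℝ)..t, g r)
    {s t : ℝ} (hs : 0 ≤ s) (hst : s ≤ t) : f t = f s + ∫ r in s..t, g r := by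
  have h1 := hgi s hs
  have h2 := seg_int g hgi hs hst
  have hadd := intervalIntegral.integral_add_adjacent_intervals h1 h2
  have e1 := hfg t (hs.trans hst)
  have e2 := hfg s hs
  linarith


private lemma window_bound (f g : ℝ → ℝ) {t₀ t₁ : ℝ} (ht : t₀ ≤ t₁) (h0 : 0 ≤ t₀)
    (hfc : ContinuousOn f (Ici 0))
    (hgi : IntervalIntegrable g volume t₀ t₁)
    (hfg : ∀ s t : ℝ, t₀ ≤ s → s ≤ t → t ≤ t₁ → f t = f s + ∫ r in s..t, g r)
    (hft0 : f t₀ ≤ 0) {K μ : ℝ} (hK : 0 ≤ K) (hμ : 0 ≤ μ)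
    (hbd : ∀ s ∈ Icc t₀ t₁, 0 < f s → g s ≤ K * μ) :
    ∀ t ∈ Icc t₀ t₁, f t ≤ (t₁ - t₀) * (K * μ) := by
  intro t htm
  obtain ⟨ht₀t, htt₁⟩ := htm
  have hKμ : 0 ≤ K * μ := mul_nonneg hK hμ
  have hTT : 0 ≤ (t₁ - t₀) * (K * μ) := mul_nonneg (by linarith) hKμ
  rcases le_or_gt (f t) 0 with hf | hf
  · linarith
  -- last zero before t
  set Z : Set ℝ := Icc t₀ t ∩ f ⁻¹' (Iic 0) with hZ
  have hfc' : ContinuousOn f (Icc t₀ t) :=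
    hfc.mono (fun s hs => le_trans h0 hs.1)
  have hZclosed : IsClosed Z :=
    hfc'.preimage_isClosed_of_isClosed isClosed_Icc isClosed_Iic
  have hZne : Z.Nonempty := ⟨t₀, ⟨le_rfl, ht₀t⟩, hft0⟩
  have hZbdd : BddAbove Z := ⟨t, fun s hs => hs.1.2⟩
  set σ := sSup Z with hσ
  have hσZ : σ ∈ Z := hZclosed.csSup_mem hZne hZbdd
  obtain ⟨⟨ht₀σ, hσt⟩, hfσ⟩ := hσZ
  simp only [mem_preimage, mem_Iic] at hfσ
  have hpos : ∀ s ∈ Ioc σ t, 0 < f s := by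
    intro s hs
    by_contra hcon
    push_neg at hcon
    have : s ∈ Z := ⟨⟨ht₀σ.trans hs.1.le, hs.2⟩, hcon⟩
    exact absurd (le_csSup hZbdd this) (not_le.2 hs.1)
  have heq : f t = f σ + ∫ r in σ..t, g r := hfg σ t ht₀σ hσt htt₁
  have hgint : IntegrableOn g (Ioc σ t) volume := by
    have : IntervalIntegrable g volume σ t := by
      refine hgi.mono_set ?_
      rw [uIcc_of_le hσt, uIcc_of_le ht]
      exact Icc_subset_Icc ht₀σ htt₁
    exact this.1
  have hIle : (∫ r in σ..t, g r) ≤ (t - σ) * (K * μ) := by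
    rw [intervalIntegral.integral_of_le hσt]
    calc (∫ r in Ioc σ t, g r) ≤ ∫ _ in Ioc σ t, K * μ := by
          refine setIntegral_mono_on hgint
            (integrableOn_const measure_Ioc_lt_top.ne) measurableSet_Ioc ?_
          intro s hs
          exact hbd s ⟨ht₀σ.trans hs.1.le, hs.2.trans htt₁⟩ (hpos s hs)
      _ = (t - σ) * (K * μ) := by
          rw [setIntegral_const, Real.volume_real_Ioc_of_le hσt]
          simp [smul_eq_mul]
  have : f t ≤ (t - σ) * (K * μ) := by linarith
  have hmul : (t - σ) * (K * μ) ≤ (t₁ - t₀) * (K * μ) :=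
    mul_le_mul_of_nonneg_right (by linarith) hKμ
  linarith

/-- Master invariance lemma via first-crossing argument. -/
private lemma seir_invariance {n : ℕ} (f g : Fin (n+1) → ℝ → ℝ)
    (hfc : ∀ i, ContinuousOn (f i) (Ici 0))
    (hgi : ∀ i, ∀ T : ℝ, 0 ≤ T → IntervalIntegrable (g i) volume 0 T)
    (hfg : ∀ i, ∀ t : ℝ, 0 ≤ t → f i t = f i 0 + ∫ s in (0:ℝ)..t, g i s)
    (hf0 : ∀ i, f i 0 ≤ 0)
    (hbd : ∀ T : ℝ, 0 ≤ T → ∃ K, 0 < K ∧ ∀ i, ∀ s ∈ Icc (0:ℝ) (T+1), ∀ μ : ℝ, 0 ≤ μ →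
        (∀ j, f j s ≤ μ) → 0 < f i s → g i s ≤ K * μ) :
    ∀ t : ℝ, 0 ≤ t → ∀ i, f i t ≤ 0 := by
  by_contra hcon
  push_neg at hcon
  obtain ⟨tbad, htbad0, ibad, hibad⟩ := hcon
  set B : Set ℝ := {t : ℝ | 0 ≤ t ∧ ∃ i, 0 < f i t} with hB
  have hBne : B.Nonempty := ⟨tbad, htbad0, ibad, hibad⟩
  have hBbdd : BddBelow B := ⟨0, fun s hs => hs.1⟩
  set τ₀ := sInf B with hτ₀
  have hτ₀0 : 0 ≤ τ₀ := le_csInf hBne fun s hs => hs.1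
  have hgood : ∀ s : ℝ, 0 ≤ s → s < τ₀ → ∀ i, f i s ≤ 0 := by
    intro s hs hsτ i
    by_contra hcon2
    push_neg at hcon2
    exact absurd (csInf_le hBbdd ⟨hs, i, hcon2⟩) (not_le.2 hsτ)
  have hgoodτ : ∀ i, f i τ₀ ≤ 0 := by
    intro i
    rcases eq_or_lt_of_le hτ₀0 with hτeq | hτpos
    · exact hτeq ▸ hf0 i
    · have hne : (𝓝[Ico (0:ℝ) τ₀] τ₀).NeBot := by
        refine mem_closure_iff_nhdsWithin_neBot.mp ?_
        rw [closure_Ico (ne_of_lt hτpos)]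
        exact ⟨hτ₀0, le_rfl⟩
      have hcw : Tendsto (f i) (𝓝[Ico (0:ℝ) τ₀] τ₀) (𝓝 (f i τ₀)) :=
        ((hfc i) τ₀ hτ₀0).mono Ico_subset_Ici_self
      refine le_of_tendsto hcw ?_
      exact eventually_mem_nhdsWithin.mono fun s hs => hgood s hs.1 hs.2 i
  obtain ⟨K, hKpos, hKbd⟩ := hbd τ₀ hτ₀0
  set δ : ℝ := min 1 (1 / (2 * K)) with hδ
  have hδpos : 0 < δ := lt_min one_pos (by positivity)
  have hδ1 : δ ≤ 1 := min_le_left _ _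
  have hδK : δ * K ≤ 1 / 2 := by
    have h1 : δ ≤ 1 / (2 * K) := min_le_right _ _
    have h2 : δ * K ≤ (1 / (2 * K)) * K := mul_le_mul_of_nonneg_right h1 hKpos.le
    have h3 : (1 / (2 * K)) * K = 1 / 2 := by field_simp
    linarith
  -- max over the window
  have hwc : ∀ i, ∃ τ ∈ Icc τ₀ (τ₀ + δ), ∀ s ∈ Icc τ₀ (τ₀ + δ), f i s ≤ f i τ := by
    intro i
    obtain ⟨τ, hτmem, hτmax⟩ := (isCompact_Icc (a := τ₀) (b := τ₀ + δ)).exists_isMaxOn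
      (nonempty_Icc.2 (by linarith)) ((hfc i).mono (fun s hs => hτ₀0.trans hs.1))
    exact ⟨τ, hτmem, fun s hs => hτmax hs⟩
  choose τ hτmem hτmax using hwc
  set μ : ℝ := (Finset.univ.sup' Finset.univ_nonempty fun i => f i (τ i)) ⊔ 0 with hμdef
  have hμ0 : 0 ≤ μ := le_sup_right
  have hμbd : ∀ i, ∀ s ∈ Icc τ₀ (τ₀ + δ), f i s ≤ μ := by
    intro i s hs
    exact (hτmax i s hs).trans (le_sup_of_le_left (Finset.le_sup' (f := fun j => f j (τ j)) (Finset.mem_univ i)))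
  have hwin : ∀ i, ∀ s ∈ Icc τ₀ (τ₀ + δ), f i s ≤ δ * (K * μ) := by
    intro i
    have := window_bound (f i) (g i) (by linarith : τ₀ ≤ τ₀ + δ) hτ₀0 (hfc i)
      (seg_int (g i) (hgi i) hτ₀0 (by linarith))
      (fun s t hs hst htt => seg_eq (f i) (g i) (hgi i) (hfg i) (hτ₀0.trans hs) hst ▸
        (seg_eq (f i) (g i) (hgi i) (hfg i) (hτ₀0.trans hs) hst))
      (hgoodτ i) hKpos.le hμ0 ?_
    · simpa using this
    · intro s hs hfs
      refine hKbd i s ⟨hτ₀0.trans hs.1, ?_⟩ μ hμ0 (fun j => hμbd j s hs) hfs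
      have := hs.2
      linarith
  have hμhalf : μ ≤ δ * (K * μ) := by
    have h1 : ∀ i ∈ (Finset.univ : Finset (Fin (n+1))), f i (τ i) ≤ δ * (K * μ) :=
      fun i _ => hwin i (τ i) (hτmem i)
    refine sup_le (Finset.sup'_le _ _ h1) ?_
    positivity
  have hμ00 : μ = 0 := by nlinarith
  -- contradiction: some bad point below τ₀ + δ
  obtain ⟨s, hsB, hsδ⟩ := exists_lt_of_csInf_lt hBne (show sInf B < τ₀ + δ by rw [← hτ₀]; linarith)
  obtain ⟨hs0, i, hfi⟩ := hsB
  rcases lt_or_ge s τ₀ with hlt | hge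
  · exact absurd (hgood s hs0 hlt i) (not_le.2 hfi)
  · have := hμbd i s ⟨hge, hsδ.le⟩
    rw [hμ00] at this
    exact absurd this (not_le.2 hfi)

private lemma tendsto_of_anti (f : ℝ → ℝ)
    (hmono : ∀ s t : ℝ, 0 ≤ s → s ≤ t → f t ≤ f s)
    (hbdd : ∀ t : ℝ, 0 ≤ t → 0 ≤ f t) :
    ∃ L, 0 ≤ L ∧ Tendsto f atTop (𝓝 L) := by
  set g : ℝ → ℝ := fun t => f (max t 0) with hg
  have hganti : Antitone g := fun s t hst =>
    hmono _ _ (le_max_right s 0) (max_le_max hst le_rfl)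
  have hgb : BddBelow (range g) := by
    refine ⟨0, fun y hy => ?_⟩
    obtain ⟨t, ht⟩ := hy
    exact ht ▸ hbdd _ (le_max_right t 0)
  have hgt := tendsto_atTop_ciInf hganti hgb
  refine ⟨⨅ t, g t, le_ciInf fun t => hbdd _ (le_max_right t 0), hgt.congr' ?_⟩
  filter_upwards [eventually_ge_atTop (0:ℝ)] with t ht
  simp [hg, max_eq_left ht]

private lemma lim_zero (h : ℝ → ℝ) (C L : ℝ)
    (hcont : ContinuousOn h (Ici 0))
    (hnn : ∀ t : ℝ, 0 ≤ t → 0 ≤ h t)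
    (hint : ∀ t : ℝ, 0 ≤ t → (∫ s in (0:ℝ)..t, h s) ≤ C)
    (hL : Tendsto h atTop (𝓝 L)) : L = 0 := by
  have hL0 : 0 ≤ L := by
    refine ge_of_tendsto hL ?_
    filter_upwards [eventually_ge_atTop (0:ℝ)] with t ht using hnn t ht
  rcases eq_or_lt_of_le hL0 with h0 | hLpos
  · exact h0.symm
  exfalso
  have hev : ∀ᶠ t in atTop, L / 2 ≤ h t :=
    hL.eventually (eventually_ge_nhds (by linarith))
  obtain ⟨T₀', hT₀'⟩ := eventually_atTop.mp hev
  set T₀ : ℝ := max T₀' 0 with hT₀def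
  have hT₀0 : 0 ≤ T₀ := le_max_right _ _
  set t : ℝ := T₀ + 2 * (|C| + 1) / L with htdef
  have htT₀ : T₀ ≤ t := by
    have h0 : 0 ≤ 2 * (|C| + 1) / L := div_nonneg (by positivity) hLpos.le
    rw [htdef]
    linarith
  have hI1 : IntervalIntegrable h volume 0 T₀ := by
    apply ContinuousOn.intervalIntegrable
    rw [uIcc_of_le hT₀0]
    exact hcont.mono (fun s hs => hs.1)
  have hI2 : IntervalIntegrable h volume T₀ t := by
    apply ContinuousOn.intervalIntegrable
    rw [uIcc_of_le htT₀]
    exact hcont.mono (fun s hs => hT₀0.trans hs.1)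
  have hadd := intervalIntegral.integral_add_adjacent_intervals hI1 hI2
  have h1 : 0 ≤ ∫ s in (0:ℝ)..T₀, h s :=
    intervalIntegral.integral_nonneg hT₀0 (fun s hs => hnn s hs.1)
  have h2 : (t - T₀) * (L / 2) ≤ ∫ s in T₀..t, h s := by
    have hmono2 := intervalIntegral.integral_mono_on htT₀
      (intervalIntegrable_const (c := L / 2)) hI2
      (fun s hs => hT₀' s ((le_max_left _ _).trans hs.1))
    rw [intervalIntegral.integral_const, smul_eq_mul] at hmono2
    exact hmono2
  have h3 : (t - T₀) * (L / 2) = |C| + 1 := by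
    rw [htdef]
    field_simp
    ring
  have h4 := hint t (hT₀0.trans htT₀)
  have h5 : C ≤ |C| := le_abs_self C
  linarith


/-- A valid control: Lebesgue-measurable with values in
`U = [βmin, βnom] × [γnom, γmax]` for all `t ≥ 0`. -/
def IsCtrl (βmin βnom γnom γmax : ℝ) (u₁ u₂ : ℝ → ℝ) : Prop :=
  Measurable u₁ ∧ Measurable u₂ ∧
    ∀ t : ℝ, 0 ≤ t → u₁ t ∈ Icc βmin βnom ∧ u₂ t ∈ Icc γnom γmax

/-- The SEIR trajectory: a (locally absolutely continuous) solution of the SEIR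
system, written in integral form. -/
def IsTraj (η : ℝ) (u₁ u₂ x₁ x₂ x₃ : ℝ → ℝ) : Prop :=
  ContinuousOn x₁ (Ici 0) ∧ ContinuousOn x₂ (Ici 0) ∧ ContinuousOn x₃ (Ici 0) ∧
    (∀ t : ℝ, 0 ≤ t → x₁ t = x₁ 0 + ∫ s in (0:ℝ)..t, -(u₁ s * x₁ s * x₃ s)) ∧
    (∀ t : ℝ, 0 ≤ t → x₂ t = x₂ 0 + ∫ s in (0:ℝ)..t, (u₁ s * x₁ s * x₃ s - η * x₂ s)) ∧
    (∀ t : ℝ, 0 ≤ t → x₃ t = x₃ 0 + ∫ s in (0:ℝ)..t, (η * x₂ s - u₂ s * x₃ s))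

/-- The state constraint set `X = {x ∈ [0,1]³ : x₃ ≤ Imax ∧ x₁ + x₂ + x₃ ≤ 1}`. -/
def InX (Imax a b c : ℝ) : Prop :=
  a ∈ Icc (0:ℝ) 1 ∧ b ∈ Icc (0:ℝ) 1 ∧ c ∈ Icc (0:ℝ) 1 ∧ c ≤ Imax ∧ a + b + c ≤ 1

/-- The invariant box `X_M = {x ∈ X : x₁ ≤ γnom/βnom ∧ x₂ ≤ γnom Imax / η}`. -/
def InXM (η βnom γnom Imax a b c : ℝ) : Prop :=
  InX Imax a b c ∧ a ≤ γnom / βnom ∧ b ≤ γnom * Imax / η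

/-- The admissible set `A`: states in `X` from which some control keeps the
trajectory in `X` for all `t ≥ 0`. -/
def InA (η βmin βnom γnom γmax Imax a b c : ℝ) : Prop :=
  InX Imax a b c ∧
    ∃ u₁ u₂ x₁ x₂ x₃ : ℝ → ℝ,
      IsCtrl βmin βnom γnom γmax u₁ u₂ ∧ IsTraj η u₁ u₂ x₁ x₂ x₃ ∧
        x₁ 0 = a ∧ x₂ 0 = b ∧ x₃ 0 = c ∧
        ∀ t : ℝ, 0 ≤ t → InX Imax (x₁ t) (x₂ t) (x₃ t)

/-- The set `A' = A \ {x ∈ A : x₁ ≥ γnom/βnom ∧ x₃(x₂+x₃) < ε}`. -/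
def InA' (η βmin βnom γnom γmax Imax ε a b c : ℝ) : Prop :=
  InA η βmin βnom γnom γmax Imax a b c ∧ ¬(γnom / βnom ≤ a ∧ c * (b + c) < ε)

/-- The quadratic stage cost `ℓ(x,u)`. -/
def stageCost (lam βnom γnom b c v₁ v₂ : ℝ) : ℝ :=
  lam * (b ^ 2 + c ^ 2) + (1 - lam) * ((v₁ - βnom) ^ 2 + (v₂ - γnom) ^ 2)

/-- The finite-horizon value function `V_T(x⁰)` (with value `∞` if infeasible). -/
def Vfin (η βmin βnom γnom γmax Imax lam T a b c : ℝ) : ℝ≥0∞ :=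
  sInf { J : ℝ≥0∞ | ∃ u₁ u₂ x₁ x₂ x₃ : ℝ → ℝ,
    IsCtrl βmin βnom γnom γmax u₁ u₂ ∧ IsTraj η u₁ u₂ x₁ x₂ x₃ ∧
      x₁ 0 = a ∧ x₂ 0 = b ∧ x₃ 0 = c ∧
      (∀ t ∈ Icc (0:ℝ) T, InX Imax (x₁ t) (x₂ t) (x₃ t)) ∧
      J = ∫⁻ s in Ioc (0:ℝ) T,
            ENNReal.ofReal (stageCost lam βnom γnom (x₂ s) (x₃ s) (u₁ s) (u₂ s)) }

/-- The infinite-horizon value function `V_∞(x⁰)` (with value `∞` if infeasible). -/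
def Vinf (η βmin βnom γnom γmax Imax lam a b c : ℝ) : ℝ≥0∞ :=
  sInf { J : ℝ≥0∞ | ∃ u₁ u₂ x₁ x₂ x₃ : ℝ → ℝ,
    IsCtrl βmin βnom γnom γmax u₁ u₂ ∧ IsTraj η u₁ u₂ x₁ x₂ x₃ ∧
      x₁ 0 = a ∧ x₂ 0 = b ∧ x₃ 0 = c ∧
      (∀ t : ℝ, 0 ≤ t → InX Imax (x₁ t) (x₂ t) (x₃ t)) ∧
      J = ∫⁻ s in Ioi (0:ℝ),
            ENNReal.ofReal (stageCost lam βnom γnom (x₂ s) (x₃ s) (u₁ s) (u₂ s)) }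

set_option maxHeartbeats 2000000

/-- `X_M` is robustly invariant, and from `X_M` the disease dies out
for every control, with `x₁` converging to a limit in `[0, γnom/βnom]`. -/
theorem XM_robust_invariance_and_eradication
    (η βmin βnom γnom γmax Imax : ℝ)
    (hη : 0 < η) (hβm : 0 < βmin) (hβ : βmin < βnom)
    (hγn : 0 < γnom) (hγ : γnom < γmax) (hIm : 0 < Imax) (hIm1 : Imax ≤ 1)
    (a b c : ℝ) (hx0 : InXM η βnom γnom Imax a b c)
    (u₁ u₂ x₁ x₂ x₃ : ℝ → ℝ)
    (hu : IsCtrl βmin βnom γnom γmax u₁ u₂)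
    (hx : IsTraj η u₁ u₂ x₁ x₂ x₃)
    (ha : x₁ 0 = a) (hb : x₂ 0 = b) (hc : x₃ 0 = c) :
    (∀ t : ℝ, 0 ≤ t → InXM η βnom γnom Imax (x₁ t) (x₂ t) (x₃ t)) ∧
      Tendsto x₂ atTop (𝓝 0) ∧ Tendsto x₃ atTop (𝓝 0) ∧
      ∃ xinf : ℝ, Tendsto x₁ atTop (𝓝 xinf) ∧ 0 ≤ xinf ∧ xinf ≤ γnom / βnom := by
  obtain ⟨hu1m, hu2m, humem⟩ := hu
  obtain ⟨hcx1, hcx2, hcx3, hint1, hint2, hint3⟩ := hx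
  obtain ⟨⟨⟨ha0, ha1⟩, ⟨hb0, hb1⟩, ⟨hc0, hc1⟩, hcI, hsum0⟩, haβ, hbB⟩ := hx0
  have hβn : 0 < βnom := hβm.trans hβ
  have hγm : 0 < γmax := hγn.trans hγ
  have hu1b : ∀ s : ℝ, 0 ≤ s → 0 ≤ u₁ s ∧ u₁ s ≤ βnom := fun s hs =>
    ⟨hβm.le.trans (humem s hs).1.1, (humem s hs).1.2⟩
  have hu2b : ∀ s : ℝ, 0 ≤ s → γnom ≤ u₂ s ∧ u₂ s ≤ γmax := fun s hs =>
    ⟨(humem s hs).2.1, (humem s hs).2.2⟩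
  -- compact bounds for the state
  have hbnd : ∀ T : ℝ, 0 ≤ T → ∃ M : ℝ, 1 ≤ M ∧
      ∀ s ∈ Icc (0:ℝ) T, |x₁ s| ≤ M ∧ |x₂ s| ≤ M ∧ |x₃ s| ≤ M := by
    intro T hT
    obtain ⟨M₁, hM₁⟩ := (isCompact_Icc (a := (0:ℝ)) (b := T)).exists_bound_of_continuousOn
      (hcx1.mono fun s hs => hs.1)
    obtain ⟨M₂, hM₂⟩ := (isCompact_Icc (a := (0:ℝ)) (b := T)).exists_bound_of_continuousOn
      (hcx2.mono fun s hs => hs.1)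
    obtain ⟨M₃, hM₃⟩ := (isCompact_Icc (a := (0:ℝ)) (b := T)).exists_bound_of_continuousOn
      (hcx3.mono fun s hs => hs.1)
    refine ⟨max (max M₁ (max M₂ M₃)) 1, le_max_right _ _, fun s hs => ⟨?_, ?_, ?_⟩⟩
    · exact le_trans (by simpa [Real.norm_eq_abs] using hM₁ s hs)
        (le_max_of_le_left (le_max_left _ _))
    · exact le_trans (by simpa [Real.norm_eq_abs] using hM₂ s hs)
        (le_max_of_le_left (le_max_of_le_right (le_max_left _ _)))
    · exact le_trans (by simpa [Real.norm_eq_abs] using hM₃ s hs)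
        (le_max_of_le_left (le_max_of_le_right (le_max_right _ _)))
  have haem : ∀ v : ℝ → ℝ, ContinuousOn v (Ici 0) → ∀ T : ℝ,
      AEMeasurable v (volume.restrict (Ioc 0 T)) := fun v hv T =>
    (hv.mono fun s hs => hs.1.le).aemeasurable measurableSet_Ioc
  -- interval integrability of integrands
  have hIF : ∀ T : ℝ, 0 ≤ T →
      IntervalIntegrable (fun s => u₁ s * x₁ s * x₃ s) volume 0 T := by
    intro T hT
    obtain ⟨M, hM1, hM⟩ := hbnd T hT
    refine II_of_bdd _ T hT
      ((hu1m.aemeasurable.mul (haem x₁ hcx1 T)).mul (haem x₃ hcx3 T))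
      ⟨βnom * M * M, ?_⟩
    intro s hs
    have h1 := hu1b s hs.1.le
    obtain ⟨m1, m2, m3⟩ := hM s ⟨hs.1.le, hs.2⟩
    have he : |u₁ s * x₁ s * x₃ s| = |u₁ s| * |x₁ s| * |x₃ s| := by
      rw [abs_mul, abs_mul]
    rw [he]
    have hus : |u₁ s| ≤ βnom := abs_le.mpr ⟨by linarith, h1.2⟩
    have h2 : |u₁ s| * |x₁ s| ≤ βnom * M :=
      mul_le_mul hus m1 (abs_nonneg _) hβn.le
    exact mul_le_mul h2 m3 (abs_nonneg _) (mul_nonneg hβn.le (by linarith))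
  have hIU2 : ∀ T : ℝ, 0 ≤ T →
      IntervalIntegrable (fun s => u₂ s * x₃ s) volume 0 T := by
    intro T hT
    obtain ⟨M, hM1, hM⟩ := hbnd T hT
    refine II_of_bdd _ T hT (hu2m.aemeasurable.mul (haem x₃ hcx3 T)) ⟨γmax * M, ?_⟩
    intro s hs
    have h1 := hu2b s hs.1.le
    obtain ⟨m1, m2, m3⟩ := hM s ⟨hs.1.le, hs.2⟩
    rw [abs_mul]
    have hus : |u₂ s| ≤ γmax := abs_le.mpr ⟨by linarith, h1.2⟩
    exact mul_le_mul hus m3 (abs_nonneg _) hγm.le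
  have hIx2 : ∀ T : ℝ, 0 ≤ T → IntervalIntegrable x₂ volume 0 T := by
    intro T hT
    apply ContinuousOn.intervalIntegrable
    rw [uIcc_of_le hT]
    exact hcx2.mono fun s hs => hs.1
  have hIx3 : ∀ T : ℝ, 0 ≤ T → IntervalIntegrable x₃ volume 0 T := by
    intro T hT
    apply ContinuousOn.intervalIntegrable
    rw [uIcc_of_le hT]
    exact hcx3.mono fun s hs => hs.1
  -- STEP 1 : positivity
  have hpos : ∀ t : ℝ, 0 ≤ t → 0 ≤ x₁ t ∧ 0 ≤ x₂ t ∧ 0 ≤ x₃ t := by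
    have key := seir_invariance (n := 2)
      ![fun t => -x₁ t, fun t => -x₂ t, fun t => -x₃ t]
      ![fun s => u₁ s * x₁ s * x₃ s, fun s => η * x₂ s - u₁ s * x₁ s * x₃ s,
        fun s => u₂ s * x₃ s - η * x₂ s]
      ?_ ?_ ?_ ?_ ?_
    · intro t ht
      have k0 : -x₁ t ≤ 0 := key t ht 0
      have k1 : -x₂ t ≤ 0 := key t ht 1
      have k2 : -x₃ t ≤ 0 := key t ht 2
      exact ⟨by linarith, by linarith, by linarith⟩
    · intro i
      match i with
      | 0 => exact hcx1.neg
      | 1 => exact hcx2.neg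
      | 2 => exact hcx3.neg
    · intro i T hT
      match i with
      | 0 => exact hIF T hT
      | 1 => exact ((hIx2 T hT).const_mul η).sub (hIF T hT)
      | 2 => exact (hIU2 T hT).sub ((hIx2 T hT).const_mul η)
    · intro i t ht
      match i with
      | 0 =>
        show -x₁ t = -x₁ 0 + ∫ s in (0:ℝ)..t, u₁ s * x₁ s * x₃ s
        have h1 := hint1 t ht
        have h2 : (∫ s in (0:ℝ)..t, -(u₁ s * x₁ s * x₃ s))
            = -∫ s in (0:ℝ)..t, u₁ s * x₁ s * x₃ s := intervalIntegral.integral_neg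
        linarith
      | 1 =>
        show -x₂ t = -x₂ 0 + ∫ s in (0:ℝ)..t, (η * x₂ s - u₁ s * x₁ s * x₃ s)
        have h1 := hint2 t ht
        have h2 : (∫ s in (0:ℝ)..t, (η * x₂ s - u₁ s * x₁ s * x₃ s))
            = -∫ s in (0:ℝ)..t, (u₁ s * x₁ s * x₃ s - η * x₂ s) := by
          rw [← intervalIntegral.integral_neg]
          congr 1
          funext s
          ring
        linarith
      | 2 =>
        show -x₃ t = -x₃ 0 + ∫ s in (0:ℝ)..t, (u₂ s * x₃ s - η * x₂ s)
        have h1 := hint3 t ht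
        have h2 : (∫ s in (0:ℝ)..t, (u₂ s * x₃ s - η * x₂ s))
            = -∫ s in (0:ℝ)..t, (η * x₂ s - u₂ s * x₃ s) := by
          rw [← intervalIntegral.integral_neg]
          congr 1
          funext s
          ring
        linarith
    · intro i
      match i with
      | 0 => show -x₁ 0 ≤ 0; rw [ha]; linarith
      | 1 => show -x₂ 0 ≤ 0; rw [hb]; linarith
      | 2 => show -x₃ 0 ≤ 0; rw [hc]; linarith
    · intro T hT
      obtain ⟨M, hM1, hM⟩ := hbnd (T + 1) (by linarith)
      have hMpos : (0:ℝ) < M := lt_of_lt_of_le one_pos hM1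
      refine ⟨βnom * M + η, add_pos (mul_pos hβn hMpos) hη, ?_⟩
      intro i s hs μ hμ hall hposi
      have hA0 : -x₁ s ≤ μ := hall 0
      have hA1 : -x₂ s ≤ μ := hall 1
      have hA2 : -x₃ s ≤ μ := hall 2
      obtain ⟨m1, m2, m3⟩ := hM s hs
      have hu1 := hu1b s hs.1
      have hu2 := hu2b s hs.1
      rw [abs_le] at m1 m2 m3
      match i with
      | 0 =>
        show u₁ s * x₁ s * x₃ s ≤ (βnom * M + η) * μ
        have hposi' : (0:ℝ) < -x₁ s := hposi
        have hx1neg : x₁ s < 0 := by linarith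
        have hp1 : u₁ s * x₁ s ≤ 0 := mul_nonpos_of_nonneg_of_nonpos hu1.1 hx1neg.le
        have hp2 : -(βnom * μ) ≤ u₁ s * x₁ s := by
          have t1 : u₁ s * (-μ) ≤ u₁ s * x₁ s :=
            mul_le_mul_of_nonneg_left (by linarith) hu1.1
          have t2 : u₁ s * μ ≤ βnom * μ := mul_le_mul_of_nonneg_right hu1.2 hμ
          have e : u₁ s * (-μ) = -(u₁ s * μ) := by ring
          linarith
        have h3 : u₁ s * x₁ s * x₃ s ≤ u₁ s * x₁ s * (-M) :=
          mul_le_mul_of_nonpos_left m3.1 hp1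
        have h4 : -(u₁ s * x₁ s) * M ≤ βnom * μ * M :=
          mul_le_mul_of_nonneg_right (by linarith) (by linarith)
        have h5 : u₁ s * x₁ s * (-M) = -(u₁ s * x₁ s) * M := by ring
        have h6 : 0 ≤ η * μ := mul_nonneg hη.le hμ
        have h7 : (βnom * M + η) * μ = βnom * μ * M + η * μ := by ring
        linarith
      | 1 =>
        show η * x₂ s - u₁ s * x₁ s * x₃ s ≤ (βnom * M + η) * μ
        have hposi' : (0:ℝ) < -x₂ s := hposi
        have hx2neg : x₂ s < 0 := by linarith
        have hMμ : 0 ≤ βnom * M * μ :=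
          mul_nonneg (mul_nonneg hβn.le (by linarith)) hμ
        have hq : -(M * μ) ≤ x₁ s * x₃ s := by
          rcases le_or_gt 0 (x₁ s) with h | h
          · have t1 : x₁ s * (-μ) ≤ x₁ s * x₃ s :=
              mul_le_mul_of_nonneg_left (by linarith) h
            have t2 : x₁ s * μ ≤ M * μ := mul_le_mul_of_nonneg_right m1.2 hμ
            have e : x₁ s * (-μ) = -(x₁ s * μ) := by ring
            linarith
          · have t1 : x₁ s * M ≤ x₁ s * x₃ s := mul_le_mul_of_nonpos_left m3.2 h.le
            have t2 : -μ * M ≤ x₁ s * M :=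
              mul_le_mul_of_nonneg_right (by linarith) (by linarith)
            have e : -μ * M = -(M * μ) := by ring
            linarith
        have hkey : -(u₁ s * x₁ s * x₃ s) ≤ βnom * M * μ := by
          rcases le_or_gt 0 (x₁ s * x₃ s) with h | h
          · have t3 : 0 ≤ u₁ s * (x₁ s * x₃ s) := mul_nonneg hu1.1 h
            rw [mul_assoc]
            linarith
          · have t3 : u₁ s * -(x₁ s * x₃ s) ≤ βnom * (M * μ) :=
              mul_le_mul hu1.2 (by linarith) (by linarith) hβn.le
            have e : u₁ s * -(x₁ s * x₃ s) = -(u₁ s * (x₁ s * x₃ s)) := by ring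
            have e2 : βnom * (M * μ) = βnom * M * μ := by ring
            rw [mul_assoc]
            linarith
        have h6 : η * x₂ s ≤ 0 := mul_nonpos_of_nonneg_of_nonpos hη.le hx2neg.le
        have h7 : (βnom * M + η) * μ = βnom * M * μ + η * μ := by ring
        have h8 : 0 ≤ η * μ := mul_nonneg hη.le hμ
        linarith
      | 2 =>
        show u₂ s * x₃ s - η * x₂ s ≤ (βnom * M + η) * μ
        have hposi' : (0:ℝ) < -x₃ s := hposi
        have hx3neg : x₃ s < 0 := by linarith
        have h1 : u₂ s * x₃ s ≤ 0 :=
          mul_nonpos_of_nonneg_of_nonpos (by linarith [hu2.1]) hx3neg.le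
        have h2 : η * (-x₂ s) ≤ η * μ := mul_le_mul_of_nonneg_left hA1 hη.le
        have e : η * (-x₂ s) = -(η * x₂ s) := by ring
        have hMμ : 0 ≤ βnom * M * μ :=
          mul_nonneg (mul_nonneg hβn.le (by linarith)) hμ
        have h7 : (βnom * M + η) * μ = βnom * M * μ + η * μ := by ring
        linarith
  have hx1nn : ∀ t : ℝ, 0 ≤ t → 0 ≤ x₁ t := fun t ht => (hpos t ht).1
  have hx2nn : ∀ t : ℝ, 0 ≤ t → 0 ≤ x₂ t := fun t ht => (hpos t ht).2.1
  have hx3nn : ∀ t : ℝ, 0 ≤ t → 0 ≤ x₃ t := fun t ht => (hpos t ht).2.2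
  -- STEP 2 : x₁ is nonincreasing
  have hseg1 : ∀ s t : ℝ, 0 ≤ s → s ≤ t →
      x₁ t = x₁ s + ∫ r in s..t, -(u₁ r * x₁ r * x₃ r) :=
    fun s t hs hst => seg_eq x₁ _ (fun T hT => (hIF T hT).neg) hint1 hs hst
  have hx1anti : ∀ s t : ℝ, 0 ≤ s → s ≤ t → x₁ t ≤ x₁ s := by
    intro s t hs hst
    have h := hseg1 s t hs hst
    have h0 : 0 ≤ ∫ r in s..t, u₁ r * x₁ r * x₃ r := by
      refine intervalIntegral.integral_nonneg hst fun r hr => ?_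
      have hr0 : 0 ≤ r := hs.trans hr.1
      exact mul_nonneg (mul_nonneg (hu1b r hr0).1 (hx1nn r hr0)) (hx3nn r hr0)
    have h2 : (∫ r in s..t, -(u₁ r * x₁ r * x₃ r))
        = -∫ r in s..t, u₁ r * x₁ r * x₃ r := intervalIntegral.integral_neg
    linarith
  have hx1le : ∀ t : ℝ, 0 ≤ t → x₁ t ≤ γnom / βnom := by
    intro t ht
    have := hx1anti 0 t le_rfl ht
    rw [ha] at this
    linarith
  -- STEP 3 : upper bounds x₂ ≤ γnom Imax / η , x₃ ≤ Imax
  have hηB : η * (γnom * Imax / η) = γnom * Imax := by field_simp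
  have hub : ∀ t : ℝ, 0 ≤ t → x₂ t ≤ γnom * Imax / η ∧ x₃ t ≤ Imax := by
    have key := seir_invariance (n := 1)
      ![fun t => x₂ t - γnom * Imax / η, fun t => x₃ t - Imax]
      ![fun s => u₁ s * x₁ s * x₃ s - η * x₂ s, fun s => η * x₂ s - u₂ s * x₃ s]
      ?_ ?_ ?_ ?_ ?_
    · intro t ht
      have k0 : x₂ t - γnom * Imax / η ≤ 0 := key t ht 0
      have k1 : x₃ t - Imax ≤ 0 := key t ht 1
      exact ⟨by linarith, by linarith⟩
    · intro i
      match i with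
      | 0 => exact hcx2.sub continuousOn_const
      | 1 => exact hcx3.sub continuousOn_const
    · intro i T hT
      match i with
      | 0 => exact (hIF T hT).sub ((hIx2 T hT).const_mul η)
      | 1 => exact ((hIx2 T hT).const_mul η).sub (hIU2 T hT)
    · intro i t ht
      match i with
      | 0 =>
        show x₂ t - γnom * Imax / η = (x₂ 0 - γnom * Imax / η)
          + ∫ s in (0:ℝ)..t, (u₁ s * x₁ s * x₃ s - η * x₂ s)
        have h1 := hint2 t ht
        linarith
      | 1 =>
        show x₃ t - Imax = (x₃ 0 - Imax) + ∫ s in (0:ℝ)..t, (η * x₂ s - u₂ s * x₃ s)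
        have h1 := hint3 t ht
        linarith
    · intro i
      match i with
      | 0 => show x₂ 0 - γnom * Imax / η ≤ 0; rw [hb]; linarith
      | 1 => show x₃ 0 - Imax ≤ 0; rw [hc]; linarith
    · intro T hT
      refine ⟨γnom + η, by linarith, ?_⟩
      intro i s hs μ hμ hall hposi
      have hA0 : x₂ s - γnom * Imax / η ≤ μ := hall 0
      have hA1 : x₃ s - Imax ≤ μ := hall 1
      have hu1 := hu1b s hs.1
      have hu2 := hu2b s hs.1
      have hx1p := hx1nn s hs.1
      have hx3p := hx3nn s hs.1
      have hx1l := hx1le s hs.1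
      match i with
      | 0 =>
        show u₁ s * x₁ s * x₃ s - η * x₂ s ≤ (γnom + η) * μ
        have hposi' : (0:ℝ) < x₂ s - γnom * Imax / η := hposi
        have h1 : u₁ s * x₁ s ≤ γnom := by
          have h2 : u₁ s * x₁ s ≤ βnom * x₁ s := mul_le_mul_of_nonneg_right hu1.2 hx1p
          have h3 : βnom * x₁ s ≤ βnom * (γnom / βnom) :=
            mul_le_mul_of_nonneg_left hx1l hβn.le
          have h4 : βnom * (γnom / βnom) = γnom := by field_simp
          linarith
        have h5 : u₁ s * x₁ s * x₃ s ≤ γnom * x₃ s :=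
          mul_le_mul_of_nonneg_right h1 hx3p
        have h6 : γnom * x₃ s ≤ γnom * (Imax + μ) :=
          mul_le_mul_of_nonneg_left (by linarith) hγn.le
        have h7 : η * (γnom * Imax / η) ≤ η * x₂ s :=
          mul_le_mul_of_nonneg_left (by linarith) hη.le
        rw [hηB] at h7
        nlinarith
      | 1 =>
        show η * x₂ s - u₂ s * x₃ s ≤ (γnom + η) * μ
        have hposi' : (0:ℝ) < x₃ s - Imax := hposi
        have h7 : η * x₂ s ≤ η * (γnom * Imax / η + μ) :=
          mul_le_mul_of_nonneg_left (by linarith) hη.le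
        have h8 : η * (γnom * Imax / η + μ) = γnom * Imax + η * μ := by
          rw [mul_add, hηB]
        have h9 : γnom * x₃ s ≤ u₂ s * x₃ s :=
          mul_le_mul_of_nonneg_right hu2.1 hx3p
        have h10 : γnom * Imax ≤ γnom * x₃ s :=
          mul_le_mul_of_nonneg_left (by linarith) hγn.le
        nlinarith
  -- STEP 4 : the sum identity and monotonicity
  have hsumeq : ∀ t : ℝ, 0 ≤ t → x₁ t + x₂ t + x₃ t
      = (x₁ 0 + x₂ 0 + x₃ 0) + ∫ s in (0:ℝ)..t, -(u₂ s * x₃ s) := by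
    intro t ht
    have h1 := hint1 t ht
    have h2 := hint2 t ht
    have h3 := hint3 t ht
    have i1 : IntervalIntegrable (fun s => -(u₁ s * x₁ s * x₃ s)) volume 0 t :=
      (hIF t ht).neg
    have i2 : IntervalIntegrable (fun s => u₁ s * x₁ s * x₃ s - η * x₂ s) volume 0 t :=
      (hIF t ht).sub ((hIx2 t ht).const_mul η)
    have i3 : IntervalIntegrable (fun s => η * x₂ s - u₂ s * x₃ s) volume 0 t :=
      ((hIx2 t ht).const_mul η).sub (hIU2 t ht)
    have e1 := intervalIntegral.integral_add i1 i2
    have e2 := intervalIntegral.integral_add (i1.add i2) i3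
    have e3 : (∫ s in (0:ℝ)..t,
        ((-(u₁ s * x₁ s * x₃ s) + (u₁ s * x₁ s * x₃ s - η * x₂ s))
          + (η * x₂ s - u₂ s * x₃ s)))
        = ∫ s in (0:ℝ)..t, -(u₂ s * x₃ s) := by
      congr 1
      funext s
      ring
    rw [e3] at e2
    linarith
  have hwseq : ∀ t : ℝ, 0 ≤ t → x₁ t + x₂ t
      = (x₁ 0 + x₂ 0) + ∫ s in (0:ℝ)..t, -(η * x₂ s) := by
    intro t ht
    have h1 := hint1 t ht
    have h2 := hint2 t ht
    have i1 : IntervalIntegrable (fun s => -(u₁ s * x₁ s * x₃ s)) volume 0 t :=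
      (hIF t ht).neg
    have i2 : IntervalIntegrable (fun s => u₁ s * x₁ s * x₃ s - η * x₂ s) volume 0 t :=
      (hIF t ht).sub ((hIx2 t ht).const_mul η)
    have e1 := intervalIntegral.integral_add i1 i2
    have e3 : (∫ s in (0:ℝ)..t,
        (-(u₁ s * x₁ s * x₃ s) + (u₁ s * x₁ s * x₃ s - η * x₂ s)))
        = ∫ s in (0:ℝ)..t, -(η * x₂ s) := by
      congr 1
      funext s
      ring
    rw [e3] at e1
    linarith
  have hvanti : ∀ s t : ℝ, 0 ≤ s → s ≤ t →
      x₁ t + x₂ t + x₃ t ≤ x₁ s + x₂ s + x₃ s := by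
    intro s t hs hst
    have h := seg_eq (fun t => x₁ t + x₂ t + x₃ t) _
      (fun T hT => (hIU2 T hT).neg) hsumeq hs hst
    have h0 : 0 ≤ ∫ r in s..t, u₂ r * x₃ r := by
      refine intervalIntegral.integral_nonneg hst fun r hr => ?_
      have hr0 : 0 ≤ r := hs.trans hr.1
      exact mul_nonneg (by linarith [(hu2b r hr0).1]) (hx3nn r hr0)
    have h2 : (∫ r in s..t, -(u₂ r * x₃ r)) = -∫ r in s..t, u₂ r * x₃ r :=
      intervalIntegral.integral_neg
    have h' : x₁ t + x₂ t + x₃ t = (x₁ s + x₂ s + x₃ s) + ∫ r in s..t, -(u₂ r * x₃ r) := h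
    linarith
  have hwanti : ∀ s t : ℝ, 0 ≤ s → s ≤ t → x₁ t + x₂ t ≤ x₁ s + x₂ s := by
    intro s t hs hst
    have h := seg_eq (fun t => x₁ t + x₂ t) _
      (fun T hT => ((hIx2 T hT).const_mul η).neg) hwseq hs hst
    have h0 : 0 ≤ ∫ r in s..t, η * x₂ r := by
      refine intervalIntegral.integral_nonneg hst fun r hr => ?_
      exact mul_nonneg hη.le (hx2nn r (hs.trans hr.1))
    have h2 : (∫ r in s..t, -(η * x₂ r)) = -∫ r in s..t, η * x₂ r :=
      intervalIntegral.integral_neg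
    have h' : x₁ t + x₂ t = (x₁ s + x₂ s) + ∫ r in s..t, -(η * x₂ r) := h
    linarith
  have hsumle : ∀ t : ℝ, 0 ≤ t → x₁ t + x₂ t + x₃ t ≤ 1 := by
    intro t ht
    have h := hvanti 0 t le_rfl ht
    rw [ha, hb, hc] at h
    linarith
  -- the invariance statement
  have hInXM : ∀ t : ℝ, 0 ≤ t → InXM η βnom γnom Imax (x₁ t) (x₂ t) (x₃ t) := by
    intro t ht
    have p1 := hx1nn t ht
    have p2 := hx2nn t ht
    have p3 := hx3nn t ht
    have s1 := hsumle t ht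
    have u23 := hub t ht
    exact ⟨⟨⟨p1, by linarith⟩, ⟨p2, by linarith⟩, ⟨p3, by linarith⟩, u23.2, s1⟩,
      hx1le t ht, u23.1⟩
  -- STEP 5 : limits
  obtain ⟨L1, hL10, hL1⟩ := tendsto_of_anti x₁ hx1anti hx1nn
  obtain ⟨Lw, hLw0, hLw⟩ := tendsto_of_anti (fun t => x₁ t + x₂ t) hwanti
    (fun t ht => by show (0:ℝ) ≤ x₁ t + x₂ t; linarith [hx1nn t ht, hx2nn t ht])
  obtain ⟨Lv, hLv0, hLv⟩ := tendsto_of_anti (fun t => x₁ t + x₂ t + x₃ t) hvanti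
    (fun t ht => by show (0:ℝ) ≤ x₁ t + x₂ t + x₃ t
                    linarith [hx1nn t ht, hx2nn t ht, hx3nn t ht])
  have hx2t : Tendsto x₂ atTop (𝓝 (Lw - L1)) :=
    (hLw.sub hL1).congr fun t => by ring
  have hx3t : Tendsto x₃ atTop (𝓝 (Lv - Lw)) :=
    (hLv.sub hLw).congr fun t => by ring
  have hx2C : ∀ t : ℝ, 0 ≤ t → (∫ s in (0:ℝ)..t, x₂ s) ≤ (x₁ 0 + x₂ 0) / η := by
    intro t ht
    have h1 := hwseq t ht
    have h2 : (∫ s in (0:ℝ)..t, -(η * x₂ s)) = -(η * ∫ s in (0:ℝ)..t, x₂ s) := by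
      rw [intervalIntegral.integral_neg, intervalIntegral.integral_const_mul]
    have h3 : 0 ≤ x₁ t + x₂ t := by linarith [hx1nn t ht, hx2nn t ht]
    rw [le_div_iff₀ hη]
    nlinarith
  have hx3C : ∀ t : ℝ, 0 ≤ t → (∫ s in (0:ℝ)..t, x₃ s)
      ≤ (x₁ 0 + x₂ 0 + x₃ 0) / γnom := by
    intro t ht
    have h1 := hsumeq t ht
    have h2 : (∫ s in (0:ℝ)..t, -(u₂ s * x₃ s)) = -∫ s in (0:ℝ)..t, u₂ s * x₃ s :=
      intervalIntegral.integral_neg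
    have h4 : γnom * ∫ s in (0:ℝ)..t, x₃ s ≤ ∫ s in (0:ℝ)..t, u₂ s * x₃ s := by
      rw [← intervalIntegral.integral_const_mul]
      refine intervalIntegral.integral_mono_on ht ((hIx3 t ht).const_mul γnom)
        (hIU2 t ht) fun s hs => ?_
      exact mul_le_mul_of_nonneg_right (hu2b s hs.1).1 (hx3nn s hs.1)
    have h3 : 0 ≤ x₁ t + x₂ t + x₃ t := by
      linarith [hx1nn t ht, hx2nn t ht, hx3nn t ht]
    rw [le_div_iff₀ hγn]
    nlinarith
  have hL2 : Lw - L1 = 0 := lim_zero x₂ _ _ hcx2 hx2nn hx2C hx2t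
  have hL3 : Lv - Lw = 0 := lim_zero x₃ _ _ hcx3 hx3nn hx3C hx3t
  refine ⟨hInXM, hL2 ▸ hx2t, hL3 ▸ hx3t, L1, hL1, hL10, ?_⟩
  refine le_of_tendsto hL1 ?_
  filter_upwards [eventually_ge_atTop (0:ℝ)] with t ht using hx1le t ht
end
end

section
/- There exists a constant C ≥ 0 such that for every x⁰ ∈ X_M, the nominal trajectory (with control u_nom) satisfies J_∞(x⁰, u_nom) = λ ∫₀^∞ (x₂(t)² + x₃(t)²) dt ≤ C. -/
open MeasureTheory Set Filter Topology
open scoped ENNReal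

noncomputable section

lemma ftc_helper {F x : ℝ → ℝ} (hF : ContinuousOn F (Ici 0))
    (hx : ∀ t : ℝ, 0 ≤ t → x t = x 0 + ∫ s in (0:ℝ)..t, F s) {t : ℝ} (ht : 0 ≤ t) :
    HasDerivWithinAt x (F t) (Ici t) t := by
  have hsub : Ici t ⊆ Ici (0:ℝ) := Ici_subset_Ici.2 ht
  have hint : IntervalIntegrable F volume 0 t := by
    apply ContinuousOn.intervalIntegrable
    apply hF.mono
    rw [uIcc_of_le ht]
    exact Icc_subset_Ici_self
  have hmeas : StronglyMeasurableAtFilter F (𝓝[Ioi t] t) volume :=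
    ⟨Ici 0, Filter.mem_of_superset self_mem_nhdsWithin
      (fun z hz => le_of_lt (lt_of_le_of_lt ht hz)),
      hF.aestronglyMeasurable measurableSet_Ici⟩
  have hcont : ContinuousWithinAt F (Ioi t) t :=
    (hF t ht).mono (fun z hz => le_of_lt (lt_of_le_of_lt ht hz))
  have hG : HasDerivWithinAt (fun u => x 0 + ∫ s in (0:ℝ)..u, F s) (F t) (Ici t) t :=
    (intervalIntegral.integral_hasDerivWithinAt_right hint hmeas hcont).const_add (x 0)
  exact hG.congr (fun u hu => hx u (le_trans ht hu)) (hx t ht)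


set_option maxHeartbeats 2000000 in
lemma traj_nonneg (η β γ : ℝ) (hη : 0 < η) (hβ : 0 < β) (hγ : 0 < γ)
    {x₁ x₂ x₃ : ℝ → ℝ}
    (h1c : ContinuousOn x₁ (Ici 0)) (h2c : ContinuousOn x₂ (Ici 0))
    (h3c : ContinuousOn x₃ (Ici 0))
    (e1 : ∀ t : ℝ, 0 ≤ t → HasDerivWithinAt x₁ (-(β * x₁ t * x₃ t)) (Ici t) t)
    (e2 : ∀ t : ℝ, 0 ≤ t → HasDerivWithinAt x₂ (β * x₁ t * x₃ t - η * x₂ t) (Ici t) t)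
    (e3 : ∀ t : ℝ, 0 ≤ t → HasDerivWithinAt x₃ (η * x₂ t - γ * x₃ t) (Ici t) t)
    (h10 : 0 ≤ x₁ 0) (h20 : 0 ≤ x₂ 0) (h30 : 0 ≤ x₃ 0) :
    ∀ t : ℝ, 0 ≤ t → 0 ≤ x₁ t ∧ 0 ≤ x₂ t ∧ 0 ≤ x₃ t := by
  intro T hT
  set f : ℝ → ℝ := fun s => max (max (-x₁ s) (-x₂ s)) (max (-x₃ s) 0) with hf_def
  have hIccsub : Icc (0:ℝ) T ⊆ Ici 0 := Icc_subset_Ici_self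
  -- bound M on |xᵢ| over [0,T]
  obtain ⟨M₁, hM₁⟩ := isCompact_Icc.exists_bound_of_continuousOn (h1c.mono hIccsub)
  obtain ⟨M₂, hM₂⟩ := isCompact_Icc.exists_bound_of_continuousOn (h2c.mono hIccsub)
  obtain ⟨M₃, hM₃⟩ := isCompact_Icc.exists_bound_of_continuousOn (h3c.mono hIccsub)
  set M : ℝ := max 0 (max M₁ (max M₂ M₃)) with hM_def
  have hM0 : 0 ≤ M := le_max_left _ _
  have hM : ∀ s ∈ Icc (0:ℝ) T, |x₁ s| ≤ M ∧ |x₂ s| ≤ M ∧ |x₃ s| ≤ M := by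
    intro s hs
    have n1 := hM₁ s hs; have n2 := hM₂ s hs; have n3 := hM₃ s hs
    rw [Real.norm_eq_abs] at n1 n2 n3
    refine ⟨n1.trans ?_, n2.trans ?_, n3.trans ?_⟩ <;> simp [hM_def]
  set K : ℝ := β * M + η + γ with hK_def
  have hK0 : 0 ≤ K := by rw [hK_def]; positivity
  have hfc : ContinuousOn f (Icc 0 T) :=
    ((h1c.mono hIccsub).neg.sup (h2c.mono hIccsub).neg).sup
      ((h3c.mono hIccsub).neg.sup continuousOn_const)
  have hf0 : f 0 ≤ 0 :=
    max_le (max_le (neg_nonpos.2 h10) (neg_nonpos.2 h20))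
      (max_le (neg_nonpos.2 h30) le_rfl)
  have hf' : ∀ s ∈ Ico (0:ℝ) T, ∀ r, K * f s < r →
      ∃ᶠ z in 𝓝[>] s, (z - s)⁻¹ * (f z - f s) < r := by
    intro s hs r hr
    have hs0 : 0 ≤ s := hs.1
    have hsmem : s ∈ Icc (0:ℝ) T := ⟨hs.1, hs.2.le⟩
    have hfs0 : 0 ≤ f s := le_trans (le_max_right _ _) (le_max_right _ _)
    have hr0 : 0 < r := lt_of_le_of_lt (mul_nonneg hK0 hfs0) hr
    obtain ⟨m1, m2, m3⟩ := hM s hsmem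
    rw [abs_le] at m1 m2 m3
    have hb1 : -x₁ s ≤ f s := le_trans (le_max_left _ _) (le_max_left _ _)
    have hb2 : -x₂ s ≤ f s := le_trans (le_max_right _ _) (le_max_left _ _)
    have hb3 : -x₃ s ≤ f s := le_trans (le_max_left _ _) (le_max_right _ _)
    have hIoisub : Ioi s ⊆ Ici (0:ℝ) := fun z hz => le_trans hs0 (le_of_lt hz)
    have hbr : ∀ (g : ℝ → ℝ) (d : ℝ), ContinuousWithinAt g (Ioi s) s →
        HasDerivWithinAt g d (Ici s) s → (g s = f s → d ≤ K * f s) → g s ≤ f s →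
        ∀ᶠ z in 𝓝[>] s, g z < f s + r * (z - s) := by
      intro g d hgc hgd hdb hgle
      by_cases hatt : g s = f s
      · have hslope : Tendsto (slope g s) (𝓝[>] s) (𝓝 d) := by
          rw [hasDerivWithinAt_iff_tendsto_slope, Ici_sdiff_left] at hgd
          exact hgd
        have hev := hslope.eventually_lt_const (lt_of_le_of_lt (hdb hatt) hr)
        filter_upwards [hev, self_mem_nhdsWithin] with z hz1 hz2
        rw [mem_Ioi] at hz2
        have hzs : 0 < z - s := sub_pos.2 hz2
        rw [slope_def_field, div_lt_iff₀ hzs] at hz1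
        rw [← hatt]
        linarith
      · have hlt : g s < f s := lt_of_le_of_ne hgle hatt
        have hev := hgc.eventually_lt_const hlt
        filter_upwards [hev, self_mem_nhdsWithin] with z hz1 hz2
        rw [mem_Ioi] at hz2
        nlinarith
    have d1 : HasDerivWithinAt (fun z => -x₁ z) (β * x₁ s * x₃ s) (Ici s) s := by
      have h := (e1 s hs0).neg
      rw [neg_neg] at h
      exact h
    have d2 : HasDerivWithinAt (fun z => -x₂ z)
        (η * x₂ s - β * x₁ s * x₃ s) (Ici s) s := by
      have h := (e2 s hs0).neg
      exact h.congr_deriv (by ring)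
    have d3 : HasDerivWithinAt (fun z => -x₃ z)
        (γ * x₃ s - η * x₂ s) (Ici s) s := by
      have h := (e3 s hs0).neg
      exact h.congr_deriv (by ring)
    have c1 : ContinuousWithinAt (fun z => -x₁ z) (Ioi s) s :=
      (((h1c s hs0).mono hIoisub)).neg
    have c2 : ContinuousWithinAt (fun z => -x₂ z) (Ioi s) s :=
      (((h2c s hs0).mono hIoisub)).neg
    have c3 : ContinuousWithinAt (fun z => -x₃ z) (Ioi s) s :=
      (((h3c s hs0).mono hIoisub)).neg
    have hfM : f s ≤ M :=
      max_le (max_le (by linarith) (by linarith)) (max_le (by linarith) hM0)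
    have bd1 : -x₁ s = f s → β * x₁ s * x₃ s ≤ K * f s := by
      intro hatt
      rw [hK_def]
      have hp : x₁ s = -f s := by linarith
      rw [hp]
      rcases le_or_gt 0 (x₃ s) with hw | hw
      · nlinarith [mul_nonneg (mul_nonneg hβ.le hfs0) hw,
          mul_nonneg hM0 hfs0, mul_nonneg hη.le hfs0, mul_nonneg hγ.le hfs0,
          mul_nonneg hβ.le (mul_nonneg hM0 hfs0)]
      · nlinarith [mul_nonneg hfs0 (show (0:ℝ) ≤ M + x₃ s by linarith),
          mul_nonneg hη.le hfs0, mul_nonneg hγ.le hfs0]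
    have bd2 : -x₂ s = f s → η * x₂ s - β * x₁ s * x₃ s ≤ K * f s := by
      intro hatt
      rw [hK_def]
      have hq : x₂ s = -f s := by linarith
      rw [hq]
      rcases le_or_gt 0 (x₁ s) with hp | hp <;> rcases le_or_gt 0 (x₃ s) with hw | hw
      · nlinarith [mul_nonneg (mul_nonneg hβ.le hp) hw, mul_nonneg hη.le hfs0,
          mul_nonneg hγ.le hfs0, mul_nonneg hβ.le (mul_nonneg hM0 hfs0)]
      · nlinarith [mul_le_mul m1.2 hb3 (by linarith) hM0, mul_nonneg hη.le hfs0,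
          mul_nonneg hγ.le hfs0]
      · nlinarith [mul_le_mul hb1 m3.2 hw hfs0, mul_nonneg hη.le hfs0,
          mul_nonneg hγ.le hfs0]
      · nlinarith [mul_nonneg (mul_nonneg hβ.le (by linarith : (0:ℝ) ≤ -x₁ s))
          (by linarith : (0:ℝ) ≤ -x₃ s), mul_nonneg hη.le hfs0,
          mul_nonneg hγ.le hfs0, mul_nonneg hβ.le (mul_nonneg hM0 hfs0)]
    have bd3 : -x₃ s = f s → γ * x₃ s - η * x₂ s ≤ K * f s := by
      intro hatt
      rw [hK_def]
      have hw : x₃ s = -f s := by linarith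
      rw [hw]
      nlinarith [mul_le_mul_of_nonneg_left hb2 hη.le, mul_nonneg hγ.le hfs0,
        mul_nonneg hβ.le (mul_nonneg hM0 hfs0)]
    have E1 := hbr _ _ c1 d1 bd1 hb1
    have E2 := hbr _ _ c2 d2 bd2 hb2
    have E3 := hbr _ _ c3 d3 bd3 hb3
    apply Filter.Eventually.frequently
    filter_upwards [E1, E2, E3, self_mem_nhdsWithin] with z h1 h2 h3 hz
    rw [mem_Ioi] at hz
    have hzs : 0 < z - s := sub_pos.2 hz
    have hfz : f z < f s + r * (z - s) :=
      max_lt (max_lt h1 h2) (max_lt h3 (by nlinarith))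
    rw [inv_mul_lt_iff₀ hzs]
    nlinarith
  have key := le_gronwallBound_of_liminf_deriv_right_le (f' := fun s => K * f s) (K := K) (ε := 0) (δ := 0)
    hfc hf' hf0 (fun s _ => by simp)
  have hfT : f T ≤ 0 := by
    have h := key T ⟨hT, le_refl T⟩
    rwa [sub_zero, gronwallBound_ε0_δ0] at h
  have hA : -x₁ T ≤ 0 := le_trans (le_trans (le_max_left _ _) (le_max_left _ _)) hfT
  have hB : -x₂ T ≤ 0 := le_trans (le_trans (le_max_right _ _) (le_max_left _ _)) hfT
  have hC : -x₃ T ≤ 0 := le_trans (le_trans (le_max_left _ _) (le_max_right _ _)) hfT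
  exact ⟨by linarith, by linarith, by linarith⟩

set_option maxHeartbeats 1000000 in
/-- the infinite-horizon cost of the nominal control is uniformly
bounded on the invariant box `X_M`. -/
theorem nominal_cost_uniformly_bounded_on_XM
    (η βmin βnom γnom γmax Imax lam : ℝ)
    (hη : 0 < η) (hβm : 0 < βmin) (hβ : βmin < βnom)
    (hγn : 0 < γnom) (hγ : γnom < γmax) (hIm : 0 < Imax) (hIm1 : Imax ≤ 1)
    (hlam : lam ∈ Ioc (0:ℝ) 1) :
    ∃ C : ℝ, 0 ≤ C ∧
      ∀ a b c : ℝ, InXM η βnom γnom Imax a b c →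
        ∀ x₁ x₂ x₃ : ℝ → ℝ,
          IsTraj η (fun _ => βnom) (fun _ => γnom) x₁ x₂ x₃ →
          x₁ 0 = a → x₂ 0 = b → x₃ 0 = c →
          (∫⁻ t in Ioi (0:ℝ),
              ENNReal.ofReal
                (stageCost lam βnom γnom (x₂ t) (x₃ t) βnom γnom)) ≤
            ENNReal.ofReal C := by
  have hβ0 : 0 < βnom := lt_trans hβm hβ
  have hγ0 : 0 < γnom := hγn
  refine ⟨2/η + 1/γnom,
    add_nonneg (div_nonneg (by norm_num) hη.le) (div_nonneg (by norm_num) hγ0.le), ?_⟩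
  intro a b c hXM x₁ x₂ x₃ htraj h10 h20 h30
  obtain ⟨⟨⟨ha0, ha1⟩, ⟨hb0, hb1⟩, ⟨hc0, hc1⟩, hcI, hsum⟩, hXa, hXb⟩ := hXM
  obtain ⟨h1c, h2c, h3c, i1, i2, i3⟩ := htraj
  simp only [] at i1 i2 i3
  have F1c : ContinuousOn (fun s => -(βnom * x₁ s * x₃ s)) (Ici 0) :=
    ((continuousOn_const.mul h1c).mul h3c).neg
  have F2c : ContinuousOn (fun s => βnom * x₁ s * x₃ s - η * x₂ s) (Ici 0) :=
    ((continuousOn_const.mul h1c).mul h3c).sub (continuousOn_const.mul h2c)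
  have F3c : ContinuousOn (fun s => η * x₂ s - γnom * x₃ s) (Ici 0) :=
    (continuousOn_const.mul h2c).sub (continuousOn_const.mul h3c)
  have e1 : ∀ t : ℝ, 0 ≤ t → HasDerivWithinAt x₁ (-(βnom * x₁ t * x₃ t)) (Ici t) t :=
    fun t ht => ftc_helper F1c i1 ht
  have e2 : ∀ t : ℝ, 0 ≤ t →
      HasDerivWithinAt x₂ (βnom * x₁ t * x₃ t - η * x₂ t) (Ici t) t :=
    fun t ht => ftc_helper F2c i2 ht
  have e3 : ∀ t : ℝ, 0 ≤ t →
      HasDerivWithinAt x₃ (η * x₂ t - γnom * x₃ t) (Ici t) t :=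
    fun t ht => ftc_helper F3c i3 ht
  have hnn : ∀ t : ℝ, 0 ≤ t → 0 ≤ x₁ t ∧ 0 ≤ x₂ t ∧ 0 ≤ x₃ t :=
    traj_nonneg η βnom γnom hη hβ0 hγ0 h1c h2c h3c e1 e2 e3
      (by rw [h10]; exact ha0) (by rw [h20]; exact hb0) (by rw [h30]; exact hc0)
  have intOn : ∀ g : ℝ → ℝ, ContinuousOn g (Ici 0) → ∀ T : ℝ, 0 ≤ T →
      IntervalIntegrable g volume 0 T := by
    intro g hg T hT
    apply ContinuousOn.intervalIntegrable
    apply hg.mono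
    rw [uIcc_of_le hT]
    exact Icc_subset_Ici_self
  have hSum : ∀ t : ℝ, 0 ≤ t →
      x₁ t + x₂ t + x₃ t = (a + b + c) - γnom * ∫ s in (0:ℝ)..t, x₃ s := by
    intro t ht
    have I1 := i1 t ht
    have I2 := i2 t ht
    have I3 := i3 t ht
    rw [h10] at I1
    rw [h20] at I2
    rw [h30] at I3
    have hadd : (∫ s in (0:ℝ)..t, -(βnom * x₁ s * x₃ s)) +
        ((∫ s in (0:ℝ)..t, (βnom * x₁ s * x₃ s - η * x₂ s)) +
         (∫ s in (0:ℝ)..t, (η * x₂ s - γnom * x₃ s))) =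
        ∫ s in (0:ℝ)..t, (-(βnom * x₁ s * x₃ s) +
          ((βnom * x₁ s * x₃ s - η * x₂ s) + (η * x₂ s - γnom * x₃ s))) := by
      rw [← intervalIntegral.integral_add (intOn _ F2c t ht) (intOn _ F3c t ht),
        ← intervalIntegral.integral_add (intOn _ F1c t ht)
          ((intOn _ F2c t ht).add (intOn _ F3c t ht))]
    have hsimp : (∫ s in (0:ℝ)..t, (-(βnom * x₁ s * x₃ s) +
          ((βnom * x₁ s * x₃ s - η * x₂ s) + (η * x₂ s - γnom * x₃ s)))) =
        -(γnom * ∫ s in (0:ℝ)..t, x₃ s) := by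
      rw [← intervalIntegral.integral_const_mul, ← intervalIntegral.integral_neg]
      apply intervalIntegral.integral_congr
      intro s _
      ring
    linarith [hadd, hsimp, I1, I2, I3]
  have hI3nn : ∀ t : ℝ, 0 ≤ t → 0 ≤ ∫ s in (0:ℝ)..t, x₃ s := fun t ht =>
    intervalIntegral.integral_nonneg ht (fun s hs => (hnn s hs.1).2.2)
  have hSt : ∀ t : ℝ, 0 ≤ t → x₁ t + x₂ t + x₃ t ≤ 1 := by
    intro t ht
    have h := hSum t ht
    have h2 := mul_nonneg hγ0.le (hI3nn t ht)
    linarith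
  have hI3le : ∀ t : ℝ, 0 ≤ t → γnom * (∫ s in (0:ℝ)..t, x₃ s) ≤ 1 := by
    intro t ht
    have h := hSum t ht
    have h0 := hnn t ht
    linarith [h0.1, h0.2.1, h0.2.2]
  have hx3le1 : ∀ t : ℝ, 0 ≤ t → x₃ t ≤ 1 := by
    intro t ht
    have := hSt t ht
    have h0 := hnn t ht
    linarith [h0.1, h0.2.1]
  have hx2le1 : ∀ t : ℝ, 0 ≤ t → x₂ t ≤ 1 := by
    intro t ht
    have := hSt t ht
    have h0 := hnn t ht
    linarith [h0.1, h0.2.2]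
  have hI2le : ∀ t : ℝ, 0 ≤ t → η * (∫ s in (0:ℝ)..t, x₂ s) ≤ 2 := by
    intro t ht
    have I3 := i3 t ht
    rw [h30] at I3
    have hsplit : (∫ s in (0:ℝ)..t, (η * x₂ s - γnom * x₃ s)) =
        η * (∫ s in (0:ℝ)..t, x₂ s) - γnom * (∫ s in (0:ℝ)..t, x₃ s) := by
      rw [intervalIntegral.integral_sub (intOn (fun s => η * x₂ s) (continuousOn_const.mul h2c) t ht)
        (intOn (fun s => γnom * x₃ s) (continuousOn_const.mul h3c) t ht),
        intervalIntegral.integral_const_mul, intervalIntegral.integral_const_mul]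
    have h1 := hx3le1 t ht
    have h2 := hI3le t ht
    linarith
  have hgint : ∀ T : ℝ, 0 ≤ T →
      IntervalIntegrable (fun s => lam * (x₂ s ^ 2 + x₃ s ^ 2)) volume 0 T :=
    intOn _ (continuousOn_const.mul ((h2c.pow 2).add (h3c.pow 2)))
  have hcost : ∀ T : ℝ, 0 ≤ T →
      (∫ s in (0:ℝ)..T, lam * (x₂ s ^ 2 + x₃ s ^ 2)) ≤ 2/η + 1/γnom := by
    intro T hT
    have hmono : (∫ s in (0:ℝ)..T, lam * (x₂ s ^ 2 + x₃ s ^ 2)) ≤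
        ∫ s in (0:ℝ)..T, (x₂ s + x₃ s) := by
      apply intervalIntegral.integral_mono_on hT (hgint T hT)
        ((intOn _ h2c T hT).add (intOn _ h3c T hT))
      intro s hs
      have h2 := (hnn s hs.1).2.1
      have h3 := (hnn s hs.1).2.2
      have h2' := hx2le1 s hs.1
      have h3' := hx3le1 s hs.1
      nlinarith [mul_nonneg h2 (sub_nonneg.2 h2'), mul_nonneg h3 (sub_nonneg.2 h3'),
        mul_nonneg (sub_nonneg.2 hlam.2)
          (add_nonneg (sq_nonneg (x₂ s)) (sq_nonneg (x₃ s)))]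
    have hsplit : (∫ s in (0:ℝ)..T, (x₂ s + x₃ s)) =
        (∫ s in (0:ℝ)..T, x₂ s) + ∫ s in (0:ℝ)..T, x₃ s :=
      intervalIntegral.integral_add (intOn _ h2c T hT) (intOn _ h3c T hT)
    have hI2 := hI2le T hT
    have hI3 := hI3le T hT
    have e2' : (∫ s in (0:ℝ)..T, x₂ s) ≤ 2/η := by
      rw [le_div_iff₀ hη]
      linarith
    have e3' : (∫ s in (0:ℝ)..T, x₃ s) ≤ 1/γnom := by
      rw [le_div_iff₀ hγ0]
      linarith
    linarith
  -- continuous measurable extension of the cost integrand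
  have hmaxmem : ∀ t : ℝ, max t 0 ∈ Ici (0:ℝ) := fun t => mem_Ici.2 (le_max_right _ _)
  have c2 : Continuous (fun t : ℝ => x₂ (max t 0)) :=
    h2c.comp_continuous (continuous_id.max continuous_const) hmaxmem
  have c3 : Continuous (fun t : ℝ => x₃ (max t 0)) :=
    h3c.comp_continuous (continuous_id.max continuous_const) hmaxmem
  have hGc : Continuous (fun t : ℝ => lam * (x₂ (max t 0) ^ 2 + x₃ (max t 0) ^ 2)) :=
    continuous_const.mul ((c2.pow 2).add (c3.pow 2))
  set G : ℝ → ℝ≥0∞ :=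
    fun t => ENNReal.ofReal (lam * (x₂ (max t 0) ^ 2 + x₃ (max t 0) ^ 2)) with hG_def
  have hGm : Measurable G := (ENNReal.continuous_ofReal.comp hGc).measurable
  have hstage : ∀ t : ℝ, 0 ≤ t →
      stageCost lam βnom γnom (x₂ t) (x₃ t) βnom γnom = lam * (x₂ t ^ 2 + x₃ t ^ 2) := by
    intro t ht
    simp [stageCost]
  have step1 : (∫⁻ t in Ioi (0:ℝ),
      ENNReal.ofReal (stageCost lam βnom γnom (x₂ t) (x₃ t) βnom γnom)) =
      ∫⁻ t in Ioi (0:ℝ), G t := by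
    apply setLIntegral_congr_fun measurableSet_Ioi
    intro t ht
    simp only [hG_def]
    rw [hstage t (le_of_lt ht), max_eq_left (le_of_lt ht)]
  rw [step1]
  have step2 : (∫⁻ t in Ioi (0:ℝ), G t) ≤ ⨆ n : ℕ, ∫⁻ t in Ioc (0:ℝ) (n:ℝ), G t := by
    rw [← lintegral_indicator measurableSet_Ioi]
    have le1 : (Ioi (0:ℝ)).indicator G ≤
        fun t => ⨆ n : ℕ, (Ioc (0:ℝ) (n:ℝ)).indicator G t := by
      intro t
      by_cases ht : t ∈ Ioi (0:ℝ)
      · obtain ⟨n, hn⟩ := exists_nat_ge t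
        rw [Set.indicator_of_mem ht]
        refine le_trans ?_ (le_iSup (fun n : ℕ => (Ioc (0:ℝ) (n:ℝ)).indicator G t) n)
        rw [Set.indicator_of_mem (mem_Ioc.mpr ⟨mem_Ioi.mp ht, hn⟩)]
      · rw [Set.indicator_of_notMem ht]
        exact zero_le
    calc ∫⁻ t, (Ioi (0:ℝ)).indicator G t
        ≤ ∫⁻ t, ⨆ n : ℕ, (Ioc (0:ℝ) (n:ℝ)).indicator G t := lintegral_mono le1
      _ = ⨆ n : ℕ, ∫⁻ t, (Ioc (0:ℝ) (n:ℝ)).indicator G t := by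
          apply lintegral_iSup (fun n => hGm.indicator measurableSet_Ioc)
          intro n m hnm t
          exact Set.indicator_le_indicator_of_subset
            (Ioc_subset_Ioc_right (by exact_mod_cast hnm)) (fun _ => zero_le) t
      _ = ⨆ n : ℕ, ∫⁻ t in Ioc (0:ℝ) (n:ℝ), G t := by
          simp [lintegral_indicator measurableSet_Ioc]
  refine le_trans step2 (iSup_le fun n => ?_)
  have hn0 : (0:ℝ) ≤ (n:ℝ) := n.cast_nonneg
  have hGeq : (∫⁻ t in Ioc (0:ℝ) (n:ℝ), G t) =
      ∫⁻ t in Ioc (0:ℝ) (n:ℝ), ENNReal.ofReal (lam * (x₂ t ^ 2 + x₃ t ^ 2)) := by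
    apply setLIntegral_congr_fun measurableSet_Ioc
    intro t ht
    simp only [hG_def]
    rw [max_eq_left (le_of_lt ht.1)]
  rw [hGeq]
  have hint : IntegrableOn (fun t => lam * (x₂ t ^ 2 + x₃ t ^ 2)) (Ioc (0:ℝ) (n:ℝ)) := by
    have h := hgint (n:ℝ) hn0
    rwa [intervalIntegrable_iff_integrableOn_Ioc_of_le hn0] at h
  rw [← ofReal_integral_eq_lintegral_ofReal hint (ae_of_all _ fun t =>
    mul_nonneg hlam.1.le (add_nonneg (sq_nonneg _) (sq_nonneg _)))]
  apply ENNReal.ofReal_le_ofReal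
  rw [← intervalIntegral.integral_of_le hn0]
  exact hcost (n:ℝ) hn0
end
end

section
/- For every x⁰ ∈ X_M, along the nominal trajectory (with control u_nom) the limit x₁^∞ = lim_{t→∞} x₁(t) exists and ∫₀^∞ x₂(t) dt = (x₁⁰ − x₁^∞ + x₂⁰)/η (in particular this integral is finite). -/
open MeasureTheory Set Filter Topology
open scoped ENNReal

noncomputable section

lemma ftc_Ici {f : ℝ → ℝ} (hf : ContinuousOn f (Ici 0)) {t : ℝ} (ht : 0 ≤ t) :
    HasDerivWithinAt (fun u => ∫ s in (0:ℝ)..u, f s) (f t) (Ici 0) t := by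
  have hint : IntervalIntegrable f volume 0 t :=
    (hf.mono (by rw [uIcc_of_le ht]; exact Icc_subset_Ici_self)).intervalIntegrable
  have hmeasIci : AEStronglyMeasurable f (volume.restrict (Ici 0)) :=
    hf.aestronglyMeasurable measurableSet_Ici
  rcases eq_or_lt_of_le ht with h0 | h0
  · subst h0
    exact intervalIntegral.integral_hasDerivWithinAt_right hint
      ⟨Ici 0, mem_of_superset self_mem_nhdsWithin Ioi_subset_Ici_self, hmeasIci⟩
      ((hf 0 (mem_Ici.mpr le_rfl)).mono Ioi_subset_Ici_self)
  · exact (intervalIntegral.integral_hasDerivAt_right hint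
      ⟨Ici 0, Ici_mem_nhds h0, hmeasIci⟩
      (hf.continuousAt (Ici_mem_nhds h0))).hasDerivWithinAt

lemma deriv_nonpos_of_crossing {w : ℝ → ℝ} {d τ : ℝ} (hτ : 0 < τ)
    (hw : HasDerivWithinAt w d (Ici 0) τ) (h0 : w τ = 0)
    (hpos : ∀ t ∈ Ico 0 τ, 0 < w t) : d ≤ 0 := by
  have hw' : HasDerivWithinAt w d (Ico 0 τ) τ := hw.mono Ico_subset_Ici_self
  have hτc : τ ∈ closure (Ico (0:ℝ) τ) := by
    rw [closure_Ico hτ.ne]; exact ⟨hτ.le, le_rfl⟩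
  have hne : (𝓝[Ico (0:ℝ) τ] τ).NeBot := mem_closure_iff_nhdsWithin_neBot.mp hτc
  rw [hasDerivWithinAt_iff_tendsto_slope' (by simp)] at hw'
  refine le_of_tendsto hw' ?_
  filter_upwards [self_mem_nhdsWithin] with t htm
  have h1 : 0 < w t := hpos t htm
  have h2 : t - τ < 0 := by linarith [htm.2]
  rw [slope_def_field, div_nonpos_iff]
  exact Or.inl ⟨by linarith, h2.le⟩

lemma nonneg_at_of_pos_left {w : ℝ → ℝ} {τ : ℝ} (hτ : 0 < τ)
    (hw : ContinuousWithinAt w (Ico 0 τ) τ)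
    (hpos : ∀ t ∈ Ico 0 τ, 0 < w t) : 0 ≤ w τ := by
  have hτc : τ ∈ closure (Ico (0:ℝ) τ) := by
    rw [closure_Ico hτ.ne]; exact ⟨hτ.le, le_rfl⟩
  have hne : (𝓝[Ico (0:ℝ) τ] τ).NeBot := mem_closure_iff_nhdsWithin_neBot.mp hτc
  refine ge_of_tendsto hw ?_
  filter_upwards [self_mem_nhdsWithin] with t htm using (hpos t htm).le

set_option maxHeartbeats 1000000 in
/-- along the nominal trajectory from `X_M`, `x₁(t)` converges and
`∫₀^∞ x₂ = (x₁⁰ - x₁^∞ + x₂⁰)/η` (in particular the integral is finite). -/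
theorem nominal_integral_of_x2
    (η βmin βnom γnom γmax Imax : ℝ)
    (hη : 0 < η) (hβm : 0 < βmin) (hβ : βmin < βnom)
    (hγn : 0 < γnom) (hγ : γnom < γmax) (hIm : 0 < Imax) (hIm1 : Imax ≤ 1)
    (a b c : ℝ) (hx0 : InXM η βnom γnom Imax a b c)
    (x₁ x₂ x₃ : ℝ → ℝ)
    (hx : IsTraj η (fun _ => βnom) (fun _ => γnom) x₁ x₂ x₃)
    (ha : x₁ 0 = a) (hb : x₂ 0 = b) (hc : x₃ 0 = c) :
    ∃ xinf : ℝ, Tendsto x₁ atTop (𝓝 xinf) ∧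
      IntegrableOn x₂ (Ioi 0) ∧
      ∫ t in Ioi (0:ℝ), x₂ t = (a - xinf + b) / η := by
  obtain ⟨hc1, hc2, hc3, he1, he2, he3⟩ := hx
  simp only at he1 he2 he3
  obtain ⟨⟨hmema, hmemb, hmemc, -, -⟩, -, -⟩ := hx0
  have ha0 : 0 ≤ a := hmema.1
  have hb0 : 0 ≤ b := hmemb.1
  have hc0 : 0 ≤ c := hmemc.1
  rw [ha] at he1
  rw [hb] at he2
  rw [hc] at he3
  have hβ0 : 0 < βnom := hβm.trans hβ
  -- continuity of the vector fields
  have hf1c : ContinuousOn (fun s => -(βnom * x₁ s * x₃ s)) (Ici 0) :=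
    ((continuousOn_const.mul hc1).mul hc3).neg
  have hf2c : ContinuousOn (fun s => βnom * x₁ s * x₃ s - η * x₂ s) (Ici 0) :=
    ((continuousOn_const.mul hc1).mul hc3).sub (continuousOn_const.mul hc2)
  have hf3c : ContinuousOn (fun s => η * x₂ s - γnom * x₃ s) (Ici 0) :=
    (continuousOn_const.mul hc2).sub (continuousOn_const.mul hc3)
  have hd1 : ∀ t, 0 ≤ t → HasDerivWithinAt x₁ (-(βnom * x₁ t * x₃ t)) (Ici 0) t := by
    intro t ht
    exact ((ftc_Ici hf1c ht).const_add a).congr (fun y hy => he1 y hy) (he1 t ht)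
  have hd2 : ∀ t, 0 ≤ t → HasDerivWithinAt x₂ (βnom * x₁ t * x₃ t - η * x₂ t) (Ici 0) t := by
    intro t ht
    exact ((ftc_Ici hf2c ht).const_add b).congr (fun y hy => he2 y hy) (he2 t ht)
  have hd3 : ∀ t, 0 ≤ t → HasDerivWithinAt x₃ (η * x₂ t - γnom * x₃ t) (Ici 0) t := by
    intro t ht
    exact ((ftc_Ici hf3c ht).const_add c).congr (fun y hy => he3 y hy) (he3 t ht)
  -- Step 1 : x₁ ≥ 0 on Ici 0
  have nonneg1 : ∀ t, 0 ≤ t → 0 ≤ x₁ t := by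
    intro t ht
    set B : ℝ → ℝ := fun u => ∫ s in (0:ℝ)..u, x₃ s with hBdef
    have hBd : ∀ u, 0 ≤ u → HasDerivWithinAt B (x₃ u) (Ici 0) u := fun u hu => ftc_Ici hc3 hu
    set ψ : ℝ → ℝ := fun u => x₁ u * Real.exp (βnom * B u) with hψdef
    have hψd : ∀ u, 0 ≤ u → HasDerivWithinAt ψ 0 (Ici 0) u := by
      intro u hu
      have hE : HasDerivWithinAt (fun v => Real.exp (βnom * B v))
          (Real.exp (βnom * B u) * (βnom * x₃ u)) (Ici 0) u := ((hBd u hu).const_mul βnom).exp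
      have h2 := (hd1 u hu).mul hE
      exact h2.congr_deriv (by ring)
    have hcontB : ContinuousOn B (Ici 0) := fun u hu => ((hBd u hu).continuousWithinAt)
    have hcontψ : ContinuousOn ψ (Ici 0) :=
      hc1.mul (Real.continuous_exp.comp_continuousOn (continuousOn_const.mul hcontB))
    have hconst := constant_of_has_deriv_right_zero
      (hcontψ.mono (Icc_subset_Ici_self : Icc (0:ℝ) t ⊆ Ici 0))
      (fun s hs => (hψd s hs.1).mono (Ici_subset_Ici.mpr hs.1)) t ⟨ht, le_rfl⟩
    have hψ0 : ψ 0 = a := by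
      simp [hψdef, hBdef, intervalIntegral.integral_same, ha]
    rw [hψ0] at hconst
    simp only [hψdef] at hconst
    by_contra hneg
    push_neg at hneg
    nlinarith [Real.exp_pos (βnom * B t)]
  -- Step 2 : x₂ ≥ 0 and x₃ ≥ 0 on Ici 0
  have nonneg23 : ∀ t, 0 ≤ t → 0 ≤ x₂ t ∧ 0 ≤ x₃ t := by
    intro T hT
    obtain ⟨C, hC⟩ := (isCompact_Icc : IsCompact (Icc (0:ℝ) T)).exists_bound_of_continuousOn
      (hc1.mono Icc_subset_Ici_self)
    have hC0 : 0 ≤ C := (norm_nonneg _).trans (hC 0 ⟨le_rfl, hT⟩)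
    set K : ℝ := βnom * C + η + γnom + 1 with hKdef
    have key : ∀ ε, 0 < ε → ∀ t ∈ Icc (0:ℝ) T,
        0 < x₂ t + ε * Real.exp (K * t) ∧ 0 < x₃ t + ε * Real.exp (K * t) := by
      intro ε hε
      set v₂ : ℝ → ℝ := fun t => x₂ t + ε * Real.exp (K * t) with hv2def
      set v₃ : ℝ → ℝ := fun t => x₃ t + ε * Real.exp (K * t) with hv3def
      have hgc : Continuous (fun t : ℝ => ε * Real.exp (K * t)) :=
        continuous_const.mul (Real.continuous_exp.comp (continuous_const.mul continuous_id))
      have hcv2 : ContinuousOn v₂ (Ici 0) := hc2.add hgc.continuousOn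
      have hcv3 : ContinuousOn v₃ (Ici 0) := hc3.add hgc.continuousOn
      have hgd : ∀ τ : ℝ, HasDerivAt (fun t : ℝ => ε * Real.exp (K * t))
          (ε * (Real.exp (K * τ) * K)) τ := by
        intro τ
        have h := (((hasDerivAt_id τ).const_mul K).exp).const_mul ε
        simpa using h
      by_contra hbad
      push_neg at hbad
      obtain ⟨t₀, ht₀, hbad⟩ := hbad
      have hSne : (Icc 0 T ∩ (fun t => min (v₂ t) (v₃ t)) ⁻¹' Iic 0).Nonempty := by
        refine ⟨t₀, ht₀, ?_⟩
        simp only [mem_preimage, mem_Iic]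
        rcases le_or_gt (v₂ t₀) 0 with h | h
        · exact le_trans (min_le_left _ _) h
        · exact le_trans (min_le_right _ _) (hbad h)
      set S := Icc 0 T ∩ (fun t => min (v₂ t) (v₃ t)) ⁻¹' Iic 0 with hSdef
      have hSclosed : IsClosed S :=
        ContinuousOn.preimage_isClosed_of_isClosed
          (continuous_min.comp_continuousOn (f := fun t => (v₂ t, v₃ t))
            ((hcv2.mono Icc_subset_Ici_self).prodMk (hcv3.mono Icc_subset_Ici_self)))
          isClosed_Icc isClosed_Iic
      have hSbdd : BddBelow S := ⟨0, fun s hs => hs.1.1⟩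
      set τ := sInf S with hτdef
      have hτS : τ ∈ S := hSclosed.csInf_mem hSne hSbdd
      have hτ0 : 0 ≤ τ := hτS.1.1
      have h0notS : (0:ℝ) ∉ S := by
        intro h0S
        have := h0S.2
        simp only [mem_preimage, mem_Iic, mul_zero, Real.exp_zero, mul_one] at this
        rcases min_le_iff.mp this with h | h
        · simp only [hv2def, mul_zero, Real.exp_zero, mul_one] at h
          rw [hb] at h; linarith
        · simp only [hv3def, mul_zero, Real.exp_zero, mul_one] at h
          rw [hc] at h; linarith
      have hτpos : 0 < τ := lt_of_le_of_ne hτ0 (fun h => h0notS (h ▸ hτS))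
      have hlt : ∀ t ∈ Ico (0:ℝ) τ, 0 < v₂ t ∧ 0 < v₃ t := by
        intro t htm
        have htnotS : t ∉ S := notMem_of_lt_csInf htm.2 hSbdd
        have htIcc : t ∈ Icc (0:ℝ) T := ⟨htm.1, htm.2.le.trans hτS.1.2⟩
        have : ¬ (min (v₂ t) (v₃ t) ≤ 0) := fun hmin => htnotS ⟨htIcc, hmin⟩
        push_neg at this
        exact ⟨lt_of_lt_of_le this (min_le_left _ _), lt_of_lt_of_le this (min_le_right _ _)⟩
      have hv2τ : 0 ≤ v₂ τ := nonneg_at_of_pos_left hτpos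
        ((hcv2 τ (mem_Ici.mpr hτ0)).mono Ico_subset_Ici_self) (fun t htm => (hlt t htm).1)
      have hv3τ : 0 ≤ v₃ τ := nonneg_at_of_pos_left hτpos
        ((hcv3 τ (mem_Ici.mpr hτ0)).mono Ico_subset_Ici_self) (fun t htm => (hlt t htm).2)
      have hminτ : min (v₂ τ) (v₃ τ) ≤ 0 := hτS.2
      have hx1τ : x₁ τ ≤ C := (le_abs_self _).trans (by simpa using hC τ hτS.1)
      have hx1τ0 : 0 ≤ x₁ τ := nonneg1 τ hτ0
      have hEpos : 0 < Real.exp (K * τ) := Real.exp_pos _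
      rcases le_total (v₂ τ) (v₃ τ) with hcase | hcase
      · -- v₂ τ = 0
        have hv2eq : v₂ τ = 0 := le_antisymm (by rw [min_eq_left hcase] at hminτ; exact hminτ) hv2τ
        have hder : HasDerivWithinAt v₂
            (βnom * x₁ τ * x₃ τ - η * x₂ τ + ε * (Real.exp (K * τ) * K)) (Ici 0) τ :=
          (hd2 τ hτ0).add (hgd τ).hasDerivWithinAt
        have hd0 := deriv_nonpos_of_crossing hτpos hder hv2eq (fun t htm => (hlt t htm).1)
        have hx2τ : x₂ τ = -(ε * Real.exp (K * τ)) := by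
          have := hv2eq; simp only [hv2def] at this; linarith
        have hx3τ : -(ε * Real.exp (K * τ)) ≤ x₃ τ := by
          have := hv3τ; simp only [hv3def] at this; linarith
        have hprod : -(C * (ε * Real.exp (K * τ))) ≤ x₁ τ * x₃ τ := by
          nlinarith [mul_le_mul_of_nonneg_left hx3τ hx1τ0,
            mul_le_mul_of_nonneg_right hx1τ (mul_pos hε hEpos).le]
        rw [hKdef] at hd0
        have hb2 : βnom * (-(C * (ε * Real.exp (K * τ)))) ≤ βnom * (x₁ τ * x₃ τ) :=
          mul_le_mul_of_nonneg_left hprod hβ0.le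
        nlinarith [mul_pos hε hEpos, mul_pos hη (mul_pos hε hEpos),
          mul_pos hγn (mul_pos hε hEpos)]
      · -- v₃ τ = 0
        have hv3eq : v₃ τ = 0 := le_antisymm (by rw [min_eq_right hcase] at hminτ; exact hminτ) hv3τ
        have hder : HasDerivWithinAt v₃
            (η * x₂ τ - γnom * x₃ τ + ε * (Real.exp (K * τ) * K)) (Ici 0) τ :=
          (hd3 τ hτ0).add (hgd τ).hasDerivWithinAt
        have hd0 := deriv_nonpos_of_crossing hτpos hder hv3eq (fun t htm => (hlt t htm).2)
        have hx3τ : x₃ τ = -(ε * Real.exp (K * τ)) := by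
          have := hv3eq; simp only [hv3def] at this; linarith
        have hx2τ : -(ε * Real.exp (K * τ)) ≤ x₂ τ := by
          have := hv2τ; simp only [hv2def] at this; linarith
        rw [hKdef] at hd0
        have h1 : η * (-(ε * Real.exp (K * τ))) ≤ η * x₂ τ :=
          mul_le_mul_of_nonneg_left hx2τ hη.le
        have h2 : 0 ≤ βnom * C * (ε * Real.exp (K * τ)) := by positivity
        rw [hx3τ] at hd0
        nlinarith [mul_pos hε hEpos, mul_pos hγn (mul_pos hε hEpos)]
    -- from the key estimate, nonnegativity at T
    have hE : (0:ℝ) < Real.exp (K * T) := Real.exp_pos _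
    constructor
    · by_contra hneg
      push_neg at hneg
      have hεpos : 0 < -x₂ T / (2 * Real.exp (K * T)) := div_pos (by linarith) (by positivity)
      have := (key _ hεpos T ⟨hT, le_rfl⟩).1
      have hcalc : -x₂ T / (2 * Real.exp (K * T)) * Real.exp (K * T) = -x₂ T / 2 := by
        field_simp
      rw [hcalc] at this
      linarith
    · by_contra hneg
      push_neg at hneg
      have hεpos : 0 < -x₃ T / (2 * Real.exp (K * T)) := div_pos (by linarith) (by positivity)
      have := (key _ hεpos T ⟨hT, le_rfl⟩).2
      have hcalc : -x₃ T / (2 * Real.exp (K * T)) * Real.exp (K * T) = -x₃ T / 2 := by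
        field_simp
      rw [hcalc] at this
      linarith
  have nonneg2 : ∀ t, 0 ≤ t → 0 ≤ x₂ t := fun t ht => (nonneg23 t ht).1
  have nonneg3 : ∀ t, 0 ≤ t → 0 ≤ x₃ t := fun t ht => (nonneg23 t ht).2
  -- interval integrability
  have hii : ∀ (f : ℝ → ℝ), ContinuousOn f (Ici 0) → ∀ s t : ℝ, 0 ≤ s → 0 ≤ t →
      IntervalIntegrable f volume s t := by
    intro f hf s t hs ht
    apply ContinuousOn.intervalIntegrable
    apply hf.mono
    rintro y hy
    rcases le_total s t with h | h
    · rw [uIcc_of_le h] at hy; exact le_trans hs hy.1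
    · rw [uIcc_of_ge h] at hy; exact le_trans ht hy.1
  -- Step 3 : x₁ is antitone on Ici 0
  have hanti : AntitoneOn x₁ (Ici 0) := by
    intro s hs t ht hst
    have hsplit := intervalIntegral.integral_add_adjacent_intervals
      (hii _ hf1c 0 s le_rfl hs) (hii _ hf1c s t hs ht)
    have h1 := he1 s hs
    have h2 := he1 t ht
    have hnonpos : ∫ u in s..t, -(βnom * x₁ u * x₃ u) ≤ 0 := by
      rw [intervalIntegral.integral_neg, neg_nonpos]
      apply intervalIntegral.integral_nonneg hst
      intro u hu
      have hu0 : 0 ≤ u := le_trans hs hu.1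
      exact mul_nonneg (mul_nonneg hβ0.le (nonneg1 u hu0)) (nonneg3 u hu0)
    rw [h1, h2, ← hsplit]
    linarith
  -- Step 4 : x₁ converges
  set g : ℝ → ℝ := fun t => x₁ (max t 0) with hgdef
  have hganti : Antitone g := by
    intro s t hst
    exact hanti (le_max_right s 0) (le_max_right t 0) (max_le_max hst le_rfl)
  have hgbdd : BddBelow (range g) := by
    refine ⟨0, ?_⟩
    rintro y ⟨t, rfl⟩
    exact nonneg1 _ (le_max_right t 0)
  have hgtend : Tendsto g atTop (𝓝 (⨅ t, g t)) := tendsto_atTop_ciInf hganti hgbdd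
  set xinf := ⨅ t, g t with hxinfdef
  have hx1tend : Tendsto x₁ atTop (𝓝 xinf) := by
    apply hgtend.congr'
    filter_upwards [eventually_ge_atTop (0:ℝ)] with t ht
    simp [hgdef, max_eq_left ht]
  -- Step 5 : the conservation identity
  have hsum : ∀ t, 0 ≤ t → x₁ t + x₂ t = a + b - η * ∫ s in (0:ℝ)..t, x₂ s := by
    intro t ht
    have h1 := he1 t ht
    have h2 := he2 t ht
    have hadd : (∫ s in (0:ℝ)..t, -(βnom * x₁ s * x₃ s)) +
        ∫ s in (0:ℝ)..t, (βnom * x₁ s * x₃ s - η * x₂ s) =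
        ∫ s in (0:ℝ)..t, -(η * x₂ s) := by
      rw [← intervalIntegral.integral_add (hii _ hf1c 0 t le_rfl ht) (hii _ hf2c 0 t le_rfl ht)]
      apply intervalIntegral.integral_congr
      intro s _
      ring
    have hmul : ∫ s in (0:ℝ)..t, -(η * x₂ s) = -(η * ∫ s in (0:ℝ)..t, x₂ s) := by
      rw [intervalIntegral.integral_neg, intervalIntegral.integral_const_mul]
    rw [h1, h2]
    rw [hmul] at hadd
    linarith
  -- Step 6 : integrability of x₂ on Ioi 0
  have hfi : ∀ i : ℝ, IntegrableOn x₂ (Ioc 0 i) := by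
    intro i
    rcases le_or_gt i 0 with h | h
    · rw [Ioc_eq_empty (not_lt.mpr h)]
      exact integrableOn_empty
    · exact ((hc2.mono (Icc_subset_Ici_self : Icc (0:ℝ) i ⊆ Ici 0)).integrableOn_Icc).mono_set
        Ioc_subset_Icc_self
  have hbound : ∀ᶠ i in atTop, (∫ s in (0:ℝ)..i, ‖x₂ s‖) ≤ (a + b) / η := by
    filter_upwards [eventually_ge_atTop (0:ℝ)] with i hi
    have hnormeq : (∫ s in (0:ℝ)..i, ‖x₂ s‖) = ∫ s in (0:ℝ)..i, x₂ s := by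
      apply intervalIntegral.integral_congr
      intro s hs
      rw [uIcc_of_le hi] at hs
      exact Real.norm_of_nonneg (nonneg2 s hs.1)
    rw [hnormeq]
    have hs := hsum i hi
    have h1 := nonneg1 i hi
    have h2 := nonneg2 i hi
    rw [le_div_iff₀ hη]
    nlinarith
  have hInt : IntegrableOn x₂ (Ioi 0) :=
    integrableOn_Ioi_of_intervalIntegral_norm_bounded ((a + b) / η) 0 hfi tendsto_id hbound
  -- Step 7 : the value of the integral
  set S := ∫ t in Ioi (0:ℝ), x₂ t with hSdef2
  have hStend : Tendsto (fun i => ∫ s in (0:ℝ)..i, x₂ s) atTop (𝓝 S) :=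
    intervalIntegral_tendsto_integral_Ioi 0 hInt tendsto_id
  set L := a + b - xinf - η * S with hLdef
  have hx2tend : Tendsto x₂ atTop (𝓝 L) := by
    have h1 : Tendsto (fun t => a + b - x₁ t - η * ∫ s in (0:ℝ)..t, x₂ s) atTop (𝓝 L) := by
      rw [hLdef]
      exact (tendsto_const_nhds.sub hx1tend).sub (hStend.const_mul η)
    apply h1.congr'
    filter_upwards [eventually_ge_atTop (0:ℝ)] with t ht
    have := hsum t ht
    linarith
  have hL0 : 0 ≤ L := by
    apply ge_of_tendsto hx2tend
    filter_upwards [eventually_ge_atTop (0:ℝ)] with t ht using nonneg2 t ht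
  have hL0' : L ≤ 0 := by
    by_contra hL
    push_neg at hL
    obtain ⟨t₀, ht₀⟩ := eventually_atTop.mp (hx2tend.eventually (eventually_gt_nhds (by linarith : L / 2 < L)))
    set t₁ := max t₀ 0 with ht₁def
    have ht₁0 : 0 ≤ t₁ := le_max_right _ _
    have hdiv : Tendsto (fun t => ∫ s in (0:ℝ)..t, x₂ s) atTop atTop := by
      apply tendsto_atTop_mono' atTop
        (show ∀ᶠ t in atTop, (∫ s in (0:ℝ)..t₁, x₂ s) + (t - t₁) * (L / 2) ≤
          ∫ s in (0:ℝ)..t, x₂ s from ?_) ?_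
      · filter_upwards [eventually_ge_atTop t₁] with t ht
        have ht0 : 0 ≤ t := le_trans ht₁0 ht
        have hsplit := intervalIntegral.integral_add_adjacent_intervals
          (hii _ hc2 0 t₁ le_rfl ht₁0) (hii _ hc2 t₁ t ht₁0 ht0)
        have hmono : (t - t₁) * (L / 2) ≤ ∫ s in t₁..t, x₂ s := by
          have hconstint : ∫ s in t₁..t, (L / 2) = (t - t₁) * (L / 2) := by
            rw [intervalIntegral.integral_const]
            simp [smul_eq_mul]
          rw [← hconstint]
          apply intervalIntegral.integral_mono_on ht
            (intervalIntegrable_const) (hii _ hc2 t₁ t ht₁0 ht0)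
          intro s hs
          exact (ht₀ s (le_trans (le_max_left t₀ 0) hs.1)).le
        rw [← hsplit]
        linarith
      · apply tendsto_atTop_add_const_left
        have hL2 : 0 < L / 2 := by linarith
        have := (tendsto_atTop_add_const_right atTop (-t₁) tendsto_id).atTop_mul_const hL2
        apply this.congr'
        filter_upwards with t
        simp only [id_eq]
        ring
    exact not_tendsto_nhds_of_tendsto_atTop hdiv S hStend
  have hLeq : L = 0 := le_antisymm hL0' hL0
  refine ⟨xinf, hx1tend, hInt, ?_⟩
  rw [hLdef] at hLeq
  show S = (a - xinf + b) / η
  rw [eq_div_iff hη.ne']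
  linarith
end
end

section
/- For every x⁰ ∈ X_M, along the nominal trajectory (with control u_nom) the limit x₁^∞ = lim_{t→∞} x₁(t) exists and ∫₀^∞ x₃(t) dt = (x₁⁰ − x₁^∞ + x₂⁰ + x₃⁰)/γ_nom (in particular this integral is finite). -/
open MeasureTheory Set Filter Topology
open scoped ENNReal

noncomputable section

section AuxLemmas
open intervalIntegral


lemma myIntervalIntegrable {g : ℝ → ℝ} (hg : ContinuousOn g (Ici 0))
    {a b : ℝ} (ha : 0 ≤ a) (hab : a ≤ b) : IntervalIntegrable g volume a b := by
  apply ContinuousOn.intervalIntegrable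
  apply hg.mono
  rw [uIcc_of_le hab]
  exact fun u hu => (ha.trans hu.1 : (0:ℝ) ≤ u)

lemma hasDerivAt_of_integral_rep {g h : ℝ → ℝ}
    (hg : ContinuousOn g (Ici 0))
    (hint : ∀ t : ℝ, 0 ≤ t → h t = h 0 + ∫ s in (0:ℝ)..t, g s)
    {τ : ℝ} (hτ : 0 < τ) : HasDerivAt h (g τ) τ := by
  have hmem : Ici (0:ℝ) ∈ 𝓝 τ := Ici_mem_nhds hτ
  have hd : HasDerivAt (fun t => ∫ s in (0:ℝ)..t, g s) (g τ) τ :=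
    integral_hasDerivAt_right (myIntervalIntegrable hg le_rfl hτ.le)
      (ContinuousOn.stronglyMeasurableAtFilter isOpen_Ioi (hg.mono Ioi_subset_Ici_self) τ hτ)
      (hg.continuousAt hmem)
  refine (hd.const_add (h 0)).congr_of_eventuallyEq ?_
  filter_upwards [hmem] with t ht
  exact hint t ht

lemma integral_rep_sub {g h : ℝ → ℝ}
    (hg : ContinuousOn g (Ici 0))
    (hint : ∀ t : ℝ, 0 ≤ t → h t = h 0 + ∫ s in (0:ℝ)..t, g s)
    {s t : ℝ} (hs : 0 ≤ s) (hst : s ≤ t) :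
    h t - h s = ∫ u in s..t, g u := by
  have hadd : (∫ u in (0:ℝ)..s, g u) + (∫ u in s..t, g u) = ∫ u in (0:ℝ)..t, g u :=
    integral_add_adjacent_intervals (myIntervalIntegrable hg le_rfl hs)
      (myIntervalIntegrable hg hs hst)
  rw [hint t (hs.trans hst), hint s hs]
  linarith

lemma antitone_of_integral_rep {g h : ℝ → ℝ}
    (hg : ContinuousOn g (Ici 0))
    (hint : ∀ t : ℝ, 0 ≤ t → h t = h 0 + ∫ s in (0:ℝ)..t, g s)
    (hgle : ∀ t : ℝ, 0 ≤ t → g t ≤ 0) :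
    ∀ s t : ℝ, 0 ≤ s → s ≤ t → h t ≤ h s := by
  intro s t hs hst
  have h1 : h t - h s = ∫ u in s..t, g u := integral_rep_sub hg hint hs hst
  have h2 : 0 ≤ ∫ u in s..t, -g u :=
    integral_nonneg hst (fun u hu => neg_nonneg.mpr (hgle u (hs.trans hu.1)))
  rw [intervalIntegral.integral_neg] at h2
  linarith

lemma tendsto_of_antitone_nonneg {h : ℝ → ℝ}
    (hmono : ∀ s t : ℝ, 0 ≤ s → s ≤ t → h t ≤ h s)
    (hbdd : ∀ t : ℝ, 0 ≤ t → 0 ≤ h t) :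
    ∃ L : ℝ, 0 ≤ L ∧ Tendsto h atTop (𝓝 L) ∧ ∀ t : ℝ, 0 ≤ t → L ≤ h t := by
  set H : ℝ → ℝ := fun t => h (max t 0) with hH
  have hanti : Antitone H := fun s t hst =>
    hmono _ _ (le_max_right s 0) (max_le_max hst le_rfl)
  have hbb : BddBelow (range H) := by
    refine ⟨0, ?_⟩
    rintro _ ⟨t, rfl⟩
    exact hbdd _ (le_max_right t 0)
  refine ⟨⨅ t, H t, ?_, ?_, ?_⟩
  · exact le_ciInf fun t => hbdd _ (le_max_right t 0)
  · have hlim : Tendsto H atTop (𝓝 (⨅ t, H t)) := tendsto_atTop_ciInf hanti hbb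
    refine hlim.congr' ?_
    filter_upwards [eventually_ge_atTop (0:ℝ)] with t ht
    simp [hH, max_eq_left ht]
  · intro t ht
    have h2 := ciInf_le hbb t
    simp only [hH, max_eq_left ht] at h2
    exact h2

lemma no_pos_deriv_at_zero {y : ℝ → ℝ} {τ d : ℝ} (hτ : 0 < τ)
    (hd : HasDerivAt y d τ) (hdpos : 0 < d) (h0 : y τ = 0)
    (hpos : ∀ t : ℝ, 0 ≤ t → t < τ → 0 < y t) : False := by
  have hs : Tendsto (slope y τ) (𝓝[≠] τ) (𝓝 d) := hasDerivAt_iff_tendsto_slope.mp hd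
  have hs' : Tendsto (slope y τ) (𝓝[<] τ) (𝓝 d) :=
    hs.mono_left (nhdsWithin_mono τ (fun t ht => ne_of_lt ht))
  have hev : ∀ᶠ t in 𝓝[<] τ, 0 < slope y τ t := hs' (Ioi_mem_nhds hdpos)
  have hev2 : ∀ᶠ t in 𝓝[<] τ, t ∈ Ioo (0:ℝ) τ :=
    Ioo_mem_nhdsLT_of_mem ⟨hτ, le_refl τ⟩
  obtain ⟨t, h1, h2⟩ := (hev.and hev2).exists
  have hyt : 0 < y t := hpos t h2.1.le h2.2
  have : slope y τ t < 0 := by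
    rw [slope_def_field, h0, sub_zero]
    exact div_neg_of_pos_of_neg hyt (by linarith [h2.2])
  linarith

lemma nonneg_of_forall_eps {v c : ℝ} (hc : 0 < c)
    (h : ∀ ε : ℝ, 0 < ε → 0 < v + ε * c) : 0 ≤ v := by
  by_contra hv
  push_neg at hv
  have h2 := h (-v / (2 * c)) (by apply div_pos (by linarith) (by linarith))
  have h3 : -v / (2 * c) * c = -v / 2 := by field_simp
  rw [h3] at h2
  linarith

lemma prod_lb {p q E B : ℝ} (hE : 0 < E) (hB : 0 ≤ B) (hp : -E ≤ p) (hq : -E ≤ q)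
    (hpB : |p| ≤ B) (hqB : |q| ≤ B) : -(E * B) ≤ p * q := by
  obtain ⟨hp1, hp2⟩ := abs_le.mp hpB
  obtain ⟨hq1, hq2⟩ := abs_le.mp hqB
  rcases le_or_gt 0 p with h | h
  · nlinarith [mul_nonneg h (by linarith : (0:ℝ) ≤ q + E),
      mul_nonneg (by linarith : (0:ℝ) ≤ B - p) hE.le]
  · nlinarith [mul_nonneg (by linarith : (0:ℝ) ≤ -p) (by linarith : (0:ℝ) ≤ B - q),
      mul_nonneg (by linarith : (0:ℝ) ≤ p + E) hB]

lemma seir_nonneg {η β γ : ℝ} {x₁ x₂ x₃ : ℝ → ℝ}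
    (hη : 0 < η) (hβ0 : 0 < β) (hγ0 : 0 < γ)
    (h10 : 0 ≤ x₁ 0) (h20 : 0 ≤ x₂ 0) (h30 : 0 ≤ x₃ 0)
    (hc₁ : ContinuousOn x₁ (Ici 0)) (hc₂ : ContinuousOn x₂ (Ici 0))
    (hc₃ : ContinuousOn x₃ (Ici 0))
    (hi₁ : ∀ t : ℝ, 0 ≤ t → x₁ t = x₁ 0 + ∫ s in (0:ℝ)..t, -(β * x₁ s * x₃ s))
    (hi₂ : ∀ t : ℝ, 0 ≤ t → x₂ t = x₂ 0 + ∫ s in (0:ℝ)..t, (β * x₁ s * x₃ s - η * x₂ s))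
    (hi₃ : ∀ t : ℝ, 0 ≤ t → x₃ t = x₃ 0 + ∫ s in (0:ℝ)..t, (η * x₂ s - γ * x₃ s)) :
    ∀ t : ℝ, 0 ≤ t → 0 ≤ x₁ t ∧ 0 ≤ x₂ t ∧ 0 ≤ x₃ t := by
  have hcf₁ : ContinuousOn (fun s => -(β * x₁ s * x₃ s)) (Ici 0) :=
    ((continuousOn_const.mul hc₁).mul hc₃).neg
  have hcf₂ : ContinuousOn (fun s => β * x₁ s * x₃ s - η * x₂ s) (Ici 0) :=
    ((continuousOn_const.mul hc₁).mul hc₃).sub (continuousOn_const.mul hc₂)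
  have hcf₃ : ContinuousOn (fun s => η * x₂ s - γ * x₃ s) (Ici 0) :=
    (continuousOn_const.mul hc₂).sub (continuousOn_const.mul hc₃)
  intro t₀ ht₀
  set T : ℝ := t₀ + 1 with hTdef
  have hT0 : (0:ℝ) < T := by linarith
  -- a uniform bound on [0, T]
  obtain ⟨B₁, hB₁⟩ := (isCompact_Icc : IsCompact (Icc (0:ℝ) T)).exists_bound_of_continuousOn
    (hc₁.mono (fun u hu => hu.1))
  obtain ⟨B₂, hB₂⟩ := (isCompact_Icc : IsCompact (Icc (0:ℝ) T)).exists_bound_of_continuousOn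
    (hc₂.mono (fun u hu => hu.1))
  obtain ⟨B₃, hB₃⟩ := (isCompact_Icc : IsCompact (Icc (0:ℝ) T)).exists_bound_of_continuousOn
    (hc₃.mono (fun u hu => hu.1))
  set B : ℝ := max (max B₁ B₂) (max B₃ 1) with hBdef
  have hB1 : (1:ℝ) ≤ B := le_max_of_le_right (le_max_right _ _)
  have hB0 : (0:ℝ) < B := lt_of_lt_of_le one_pos hB1
  have hB : ∀ u ∈ Icc (0:ℝ) T, |x₁ u| ≤ B ∧ |x₂ u| ≤ B ∧ |x₃ u| ≤ B := by
    intro u hu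
    refine ⟨?_, ?_, ?_⟩
    · exact le_trans (by simpa [Real.norm_eq_abs] using hB₁ u hu)
        (le_max_of_le_left (le_max_left _ _))
    · exact le_trans (by simpa [Real.norm_eq_abs] using hB₂ u hu)
        (le_max_of_le_left (le_max_right _ _))
    · exact le_trans (by simpa [Real.norm_eq_abs] using hB₃ u hu)
        (le_max_of_le_right (le_max_left _ _))
  set K : ℝ := β * B + η + 1 with hKdef
  have hK0 : (0:ℝ) < K := by positivity
  -- the ε-barrier claim
  have key : ∀ ε : ℝ, 0 < ε → ∀ u ∈ Icc (0:ℝ) T,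
      0 < x₁ u + ε * Real.exp (K * u) ∧ 0 < x₂ u + ε * Real.exp (K * u) ∧
      0 < x₃ u + ε * Real.exp (K * u) := by
    intro ε hε
    by_contra hcon
    push_neg at hcon
    obtain ⟨u₀, hu₀, hbad⟩ := hcon
    set e : ℝ → ℝ := fun u => ε * Real.exp (K * u) with he
    have hepos : ∀ u : ℝ, 0 < e u := fun u => by
      simp only [he]; positivity
    set y₁ : ℝ → ℝ := fun u => x₁ u + e u with hy₁
    set y₂ : ℝ → ℝ := fun u => x₂ u + e u with hy₂
    set y₃ : ℝ → ℝ := fun u => x₃ u + e u with hy₃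
    have hce : Continuous e := by
      apply continuous_const.mul
      exact Real.continuous_exp.comp (continuous_const.mul continuous_id)
    set S : Set ℝ := (Icc (0:ℝ) T ∩ y₁ ⁻¹' Iic 0) ∪ (Icc (0:ℝ) T ∩ y₂ ⁻¹' Iic 0) ∪
      (Icc (0:ℝ) T ∩ y₃ ⁻¹' Iic 0) with hSdef
    have hmemS : ∀ u : ℝ, u ∈ S ↔ u ∈ Icc (0:ℝ) T ∧ (y₁ u ≤ 0 ∨ y₂ u ≤ 0 ∨ y₃ u ≤ 0) := by
      intro u
      simp only [hSdef, mem_union, mem_inter_iff, mem_preimage, mem_Iic]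
      tauto
    have hSne : S.Nonempty := by
      refine ⟨u₀, (hmemS u₀).mpr ⟨hu₀, ?_⟩⟩
      rcases le_or_gt (y₁ u₀) 0 with h | h
      · exact Or.inl h
      rcases le_or_gt (y₂ u₀) 0 with h2 | h2
      · exact Or.inr (Or.inl h2)
      · exact Or.inr (Or.inr (hbad h h2))
    have hScc : S ⊆ Icc 0 T := fun u hu => ((hmemS u).mp hu).1
    have hSbdd : BddBelow S := ⟨0, fun u hu => (hScc hu).1⟩
    have hcy : ∀ x : ℝ → ℝ, ContinuousOn x (Ici 0) →
        ContinuousOn (fun u => x u + e u) (Icc (0:ℝ) T) := fun x hx =>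
      (hx.mono (fun u hu => hu.1)).add hce.continuousOn
    have hSclosed : IsClosed S := by
      refine IsClosed.union (IsClosed.union ?_ ?_) ?_ <;>
        exact ContinuousOn.preimage_isClosed_of_isClosed (hcy _ (by assumption))
          isClosed_Icc isClosed_Iic
    set τ : ℝ := sInf S with hτdef
    have hτS : τ ∈ S := hSclosed.csInf_mem hSne hSbdd
    have hτIcc : τ ∈ Icc (0:ℝ) T := hScc hτS
    have h0notS : (0:ℝ) ∉ S := by
      intro h0
      obtain ⟨-, h⟩ := (hmemS 0).mp h0
      have e0 : e 0 = ε := by simp [he]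
      have p1 : 0 < y₁ 0 := by simp only [hy₁, e0]; linarith
      have p2 : 0 < y₂ 0 := by simp only [hy₂, e0]; linarith
      have p3 : 0 < y₃ 0 := by simp only [hy₃, e0]; linarith
      rcases h with h | h | h <;> linarith
    have hτ0 : 0 < τ := lt_of_le_of_ne hτIcc.1 (fun h => h0notS (h ▸ hτS))
    have hbefore : ∀ u : ℝ, 0 ≤ u → u < τ → 0 < y₁ u ∧ 0 < y₂ u ∧ 0 < y₃ u := by
      intro u hu huτ
      have hunot : u ∉ S := notMem_of_lt_csInf huτ hSbdd
      have huIcc : u ∈ Icc (0:ℝ) T := ⟨hu, huτ.le.trans hτIcc.2⟩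
      rw [hmemS u] at hunot
      push_neg at hunot
      obtain ⟨n1, n2, n3⟩ := hunot huIcc
      exact ⟨n1, n2, n3⟩
    -- at τ all yᵢ are ≥ 0
    have htend : ∀ x : ℝ → ℝ, ContinuousOn x (Ici 0) →
        Tendsto (fun u => x u + e u) (𝓝[<] τ) (𝓝 (x τ + e τ)) := by
      intro x hx
      have : ContinuousAt (fun u => x u + e u) τ :=
        (hx.continuousAt (Ici_mem_nhds hτ0)).add hce.continuousAt
      exact this.tendsto.mono_left nhdsWithin_le_nhds
    have hev2 : ∀ᶠ u in 𝓝[<] τ, u ∈ Ioo (0:ℝ) τ := Ioo_mem_nhdsLT_of_mem ⟨hτ0, le_refl τ⟩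
    have hyτ1 : 0 ≤ y₁ τ := ge_of_tendsto (htend x₁ hc₁)
      (hev2.mono fun u hu => (hbefore u hu.1.le hu.2).1.le)
    have hyτ2 : 0 ≤ y₂ τ := ge_of_tendsto (htend x₂ hc₂)
      (hev2.mono fun u hu => (hbefore u hu.1.le hu.2).2.1.le)
    have hyτ3 : 0 ≤ y₃ τ := ge_of_tendsto (htend x₃ hc₃)
      (hev2.mono fun u hu => (hbefore u hu.1.le hu.2).2.2.le)
    -- derivative of the barrier
    have hderiv_e : HasDerivAt e (K * e τ) τ := by
      have h1 : HasDerivAt (fun u : ℝ => K * u) K τ := by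
        simpa using (hasDerivAt_id τ).const_mul K
      have h2 := (h1.exp).const_mul ε
      refine h2.congr_deriv ?_
      show _ = K * (ε * Real.exp (K * τ))
      ring
    obtain ⟨hB1τ, hB2τ, hB3τ⟩ := hB τ hτIcc
    have hEτ : 0 < e τ := hepos τ
    have hx1ge : -(e τ) ≤ x₁ τ := by simp only [hy₁] at hyτ1; linarith
    have hx2ge : -(e τ) ≤ x₂ τ := by simp only [hy₂] at hyτ2; linarith
    have hx3ge : -(e τ) ≤ x₃ τ := by simp only [hy₃] at hyτ3; linarith
    obtain ⟨-, hcase⟩ := (hmemS τ).mp hτS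
    rcases hcase with h | h | h
    · -- y₁ hits zero
      have h1z : y₁ τ = 0 := le_antisymm h hyτ1
      have hx1τ : x₁ τ = -(e τ) := by simp only [hy₁] at h1z; linarith
      have hd : HasDerivAt y₁ (-(β * x₁ τ * x₃ τ) + K * e τ) τ :=
        (hasDerivAt_of_integral_rep hcf₁ hi₁ hτ0).add hderiv_e
      refine no_pos_deriv_at_zero hτ0 hd ?_ h1z (fun u hu huτ => (hbefore u hu huτ).1)
      rw [hx1τ]
      have h3 := abs_le.mp hB3τ
      have hpp : β * e τ * (-B) ≤ β * e τ * x₃ τ :=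
        mul_le_mul_of_nonneg_left h3.1 (by positivity)
      have hKe : K * e τ = β * B * e τ + η * e τ + e τ := by rw [hKdef]; ring
      have hrw : -(β * -(e τ) * x₃ τ) = β * e τ * x₃ τ := by ring
      have h2 : β * e τ * (-B) = -(β * B * e τ) := by ring
      rw [hrw]
      linarith [mul_pos hη hEτ, hEτ]
    · -- y₂ hits zero
      have h2z : y₂ τ = 0 := le_antisymm h hyτ2
      have hx2τ : x₂ τ = -(e τ) := by simp only [hy₂] at h2z; linarith
      have hd : HasDerivAt y₂ ((β * x₁ τ * x₃ τ - η * x₂ τ) + K * e τ) τ :=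
        (hasDerivAt_of_integral_rep hcf₂ hi₂ hτ0).add hderiv_e
      refine no_pos_deriv_at_zero hτ0 hd ?_ h2z (fun u hu huτ => (hbefore u hu huτ).2.1)
      have hprod : -(e τ * B) ≤ x₁ τ * x₃ τ :=
        prod_lb hEτ hB0.le hx1ge hx3ge hB1τ hB3τ
      have hKe : K * e τ = β * B * e τ + η * e τ + e τ := by rw [hKdef]; ring
      rw [hx2τ]
      have hpm : β * -(e τ * B) ≤ β * (x₁ τ * x₃ τ) :=
        mul_le_mul_of_nonneg_left hprod hβ0.le
      have a1 : β * -(e τ * B) = -(β * B * e τ) := by ring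
      have a2 : β * (x₁ τ * x₃ τ) = β * x₁ τ * x₃ τ := by ring
      have a3 : η * -(e τ) = -(η * e τ) := by ring
      linarith [mul_pos hη hEτ, hEτ]
    · -- y₃ hits zero
      have h3z : y₃ τ = 0 := le_antisymm h hyτ3
      have hx3τ : x₃ τ = -(e τ) := by simp only [hy₃] at h3z; linarith
      have hd : HasDerivAt y₃ ((η * x₂ τ - γ * x₃ τ) + K * e τ) τ :=
        (hasDerivAt_of_integral_rep hcf₃ hi₃ hτ0).add hderiv_e
      refine no_pos_deriv_at_zero hτ0 hd ?_ h3z (fun u hu huτ => (hbefore u hu huτ).2.2)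
      have hKe : K * e τ = β * B * e τ + η * e τ + e τ := by rw [hKdef]; ring
      have hηx2 : η * (-(e τ)) ≤ η * x₂ τ := mul_le_mul_of_nonneg_left hx2ge hη.le
      have a3 : η * (-(e τ)) = -(η * e τ) := by ring
      have a4 : γ * -(e τ) = -(γ * e τ) := by ring
      have hb2 : 0 ≤ β * B * e τ := by positivity
      rw [hx3τ]
      linarith [mul_pos hγ0 hEτ, hEτ]
  -- pass ε → 0
  have ht₀Icc : t₀ ∈ Icc (0:ℝ) T := ⟨ht₀, by linarith⟩
  have hexp : 0 < Real.exp (K * t₀) := Real.exp_pos _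
  refine ⟨?_, ?_, ?_⟩
  · exact nonneg_of_forall_eps hexp (fun ε hε => (key ε hε t₀ ht₀Icc).1)
  · exact nonneg_of_forall_eps hexp (fun ε hε => (key ε hε t₀ ht₀Icc).2.1)
  · exact nonneg_of_forall_eps hexp (fun ε hε => (key ε hε t₀ ht₀Icc).2.2)

end AuxLemmas
open intervalIntegral

/-- along the nominal trajectory from `X_M`, `x₁(t)` converges and
`∫₀^∞ x₃ = (x₁⁰ - x₁^∞ + x₂⁰ + x₃⁰)/γnom` (in particular the integral is finite). -/
theorem nominal_integral_of_x3
    (η βmin βnom γnom γmax Imax : ℝ)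
    (hη : 0 < η) (hβm : 0 < βmin) (hβ : βmin < βnom)
    (hγn : 0 < γnom) (hγ : γnom < γmax) (hIm : 0 < Imax) (hIm1 : Imax ≤ 1)
    (a b c : ℝ) (hx0 : InXM η βnom γnom Imax a b c)
    (x₁ x₂ x₃ : ℝ → ℝ)
    (hx : IsTraj η (fun _ => βnom) (fun _ => γnom) x₁ x₂ x₃)
    (ha : x₁ 0 = a) (hb : x₂ 0 = b) (hc : x₃ 0 = c) :
    ∃ xinf : ℝ, Tendsto x₁ atTop (𝓝 xinf) ∧
      IntegrableOn x₃ (Ioi 0) ∧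
      ∫ t in Ioi (0:ℝ), x₃ t = (a - xinf + b + c) / γnom := by
  obtain ⟨⟨⟨ha0, ha1⟩, ⟨hb0, hb1⟩, ⟨hc0, hc1⟩, hcI, hsum⟩, haM, hbM⟩ := hx0
  obtain ⟨hc₁, hc₂, hc₃, hi₁, hi₂, hi₃⟩ := hx
  have hβ0 : 0 < βnom := hβm.trans hβ
  have hγne : γnom ≠ 0 := ne_of_gt hγn
  have hi₁' : ∀ t : ℝ, 0 ≤ t → x₁ t = x₁ 0 + ∫ s in (0:ℝ)..t, -(βnom * x₁ s * x₃ s) := by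
    intro t ht; simpa using hi₁ t ht
  have hi₂' : ∀ t : ℝ, 0 ≤ t →
      x₂ t = x₂ 0 + ∫ s in (0:ℝ)..t, (βnom * x₁ s * x₃ s - η * x₂ s) := by
    intro t ht; simpa using hi₂ t ht
  have hi₃' : ∀ t : ℝ, 0 ≤ t →
      x₃ t = x₃ 0 + ∫ s in (0:ℝ)..t, (η * x₂ s - γnom * x₃ s) := by
    intro t ht; simpa using hi₃ t ht
  have hnn := seir_nonneg hη hβ0 hγn (by rw [ha]; exact ha0) (by rw [hb]; exact hb0)
    (by rw [hc]; exact hc0) hc₁ hc₂ hc₃ hi₁' hi₂' hi₃'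
  have hcf₁ : ContinuousOn (fun s => -(βnom * x₁ s * x₃ s)) (Ici 0) :=
    ((continuousOn_const.mul hc₁).mul hc₃).neg
  -- x₁ is nonincreasing and stays below γnom/βnom
  have hx1anti : ∀ s t : ℝ, 0 ≤ s → s ≤ t → x₁ t ≤ x₁ s := by
    refine antitone_of_integral_rep hcf₁ hi₁' (fun t ht => ?_)
    obtain ⟨p1, p2, p3⟩ := hnn t ht
    have : 0 ≤ βnom * x₁ t * x₃ t := mul_nonneg (mul_nonneg hβ0.le p1) p3
    linarith
  have hx1le : ∀ t : ℝ, 0 ≤ t → x₁ t ≤ γnom / βnom := by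
    intro t ht
    have h1 := hx1anti 0 t le_rfl ht
    rw [ha] at h1
    linarith
  -- the total mass n
  set n : ℝ → ℝ := fun t => x₁ t + x₂ t + x₃ t with hndef
  have hin : ∀ t : ℝ, 0 ≤ t → n t = n 0 + ∫ s in (0:ℝ)..t, -(γnom * x₃ s) := by
    intro t ht
    have hcf₂ : ContinuousOn (fun s => βnom * x₁ s * x₃ s - η * x₂ s) (Ici 0) :=
      ((continuousOn_const.mul hc₁).mul hc₃).sub (continuousOn_const.mul hc₂)
    have hcf₃ : ContinuousOn (fun s => η * x₂ s - γnom * x₃ s) (Ici 0) :=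
      (continuousOn_const.mul hc₂).sub (continuousOn_const.mul hc₃)
    have i1 := myIntervalIntegrable hcf₁ le_rfl ht
    have i2 := myIntervalIntegrable hcf₂ le_rfl ht
    have i3 := myIntervalIntegrable hcf₃ le_rfl ht
    have key : (∫ s in (0:ℝ)..t, (-(βnom * x₁ s * x₃ s) +
          ((βnom * x₁ s * x₃ s - η * x₂ s) + (η * x₂ s - γnom * x₃ s)))) =
        (∫ s in (0:ℝ)..t, -(βnom * x₁ s * x₃ s)) +
          ((∫ s in (0:ℝ)..t, (βnom * x₁ s * x₃ s - η * x₂ s)) +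
            (∫ s in (0:ℝ)..t, (η * x₂ s - γnom * x₃ s))) := by
      rw [integral_add i1 (i2.add i3), integral_add i2 i3]
    have keq : (∫ s in (0:ℝ)..t, (-(βnom * x₁ s * x₃ s) +
          ((βnom * x₁ s * x₃ s - η * x₂ s) + (η * x₂ s - γnom * x₃ s)))) =
        ∫ s in (0:ℝ)..t, -(γnom * x₃ s) := by
      apply integral_congr
      intro s _
      ring
    have e1 := hi₁' t ht
    have e2 := hi₂' t ht
    have e3 := hi₃' t ht
    simp only [hndef]
    linarith
  have hnanti : ∀ s t : ℝ, 0 ≤ s → s ≤ t → n t ≤ n s :=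
    antitone_of_integral_rep ((continuousOn_const.mul hc₃).neg) hin
      (fun t ht => neg_nonpos.mpr (mul_nonneg hγn.le (hnn t ht).2.2))
  have hnnn : ∀ t : ℝ, 0 ≤ t → 0 ≤ n t := by
    intro t ht
    obtain ⟨p1, p2, p3⟩ := hnn t ht
    simp only [hndef]
    linarith
  obtain ⟨M, hM0, hMt, hMle⟩ := tendsto_of_antitone_nonneg hnanti hnnn
  -- the tail mass w = x₂ + x₃
  set w : ℝ → ℝ := fun t => x₂ t + x₃ t with hwdef
  have hiw : ∀ t : ℝ, 0 ≤ t →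
      w t = w 0 + ∫ s in (0:ℝ)..t, (βnom * x₁ s * x₃ s - γnom * x₃ s) := by
    intro t ht
    have hcf₂ : ContinuousOn (fun s => βnom * x₁ s * x₃ s - η * x₂ s) (Ici 0) :=
      ((continuousOn_const.mul hc₁).mul hc₃).sub (continuousOn_const.mul hc₂)
    have hcf₃ : ContinuousOn (fun s => η * x₂ s - γnom * x₃ s) (Ici 0) :=
      (continuousOn_const.mul hc₂).sub (continuousOn_const.mul hc₃)
    have i2 := myIntervalIntegrable hcf₂ le_rfl ht
    have i3 := myIntervalIntegrable hcf₃ le_rfl ht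
    have key : (∫ s in (0:ℝ)..t, ((βnom * x₁ s * x₃ s - η * x₂ s) +
          (η * x₂ s - γnom * x₃ s))) =
        (∫ s in (0:ℝ)..t, (βnom * x₁ s * x₃ s - η * x₂ s)) +
          (∫ s in (0:ℝ)..t, (η * x₂ s - γnom * x₃ s)) := integral_add i2 i3
    have keq : (∫ s in (0:ℝ)..t, ((βnom * x₁ s * x₃ s - η * x₂ s) +
          (η * x₂ s - γnom * x₃ s))) =
        ∫ s in (0:ℝ)..t, (βnom * x₁ s * x₃ s - γnom * x₃ s) := by
      apply integral_congr
      intro s _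
      ring
    have e2 := hi₂' t ht
    have e3 := hi₃' t ht
    simp only [hwdef]
    linarith
  have hcw : ContinuousOn (fun s => βnom * x₁ s * x₃ s - γnom * x₃ s) (Ici 0) :=
    ((continuousOn_const.mul hc₁).mul hc₃).sub (continuousOn_const.mul hc₃)
  have hwanti : ∀ s t : ℝ, 0 ≤ s → s ≤ t → w t ≤ w s := by
    refine antitone_of_integral_rep hcw hiw (fun t ht => ?_)
    obtain ⟨p1, p2, p3⟩ := hnn t ht
    have h1 : βnom * x₁ t ≤ γnom := by
      have h2 := mul_le_mul_of_nonneg_left (hx1le t ht) hβ0.le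
      have h3 : βnom * (γnom / βnom) = γnom := by field_simp
      linarith
    have h4 := mul_le_mul_of_nonneg_right h1 p3
    linarith [h4]
  have hwnn : ∀ t : ℝ, 0 ≤ t → 0 ≤ w t := by
    intro t ht
    obtain ⟨p1, p2, p3⟩ := hnn t ht
    simp only [hwdef]
    linarith
  obtain ⟨L, hL0, hLt, hLle⟩ := tendsto_of_antitone_nonneg hwanti hwnn
  -- the running integral of x₃
  set F : ℝ → ℝ := fun t => ∫ s in (0:ℝ)..t, x₃ s with hFdef
  have hFn : ∀ t : ℝ, 0 ≤ t → n t = n 0 - γnom * F t := by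
    intro t ht
    have h1 := hin t ht
    have h2 : (∫ s in (0:ℝ)..t, -(γnom * x₃ s)) = -(γnom * ∫ s in (0:ℝ)..t, x₃ s) := by
      rw [intervalIntegral.integral_neg, intervalIntegral.integral_const_mul]
    simp only [hFdef]
    linarith
  have hFtend : Tendsto F atTop (𝓝 ((n 0 - M) / γnom)) := by
    have h1 : Tendsto (fun t => (n 0 - n t) / γnom) atTop (𝓝 ((n 0 - M) / γnom)) :=
      (tendsto_const_nhds.sub hMt).div_const γnom
    refine h1.congr' ?_
    filter_upwards [eventually_ge_atTop (0:ℝ)] with t ht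
    have h2 : γnom * F t = n 0 - n t := by linarith [hFn t ht]
    rw [← h2, mul_div_cancel_left₀ _ hγne]
  have hx3int : ∀ i : ℝ, IntegrableOn x₃ (Ioc 0 i) := by
    intro i
    rcases le_or_gt i 0 with h | h
    · rw [Ioc_eq_empty (not_lt.mpr h)]
      exact integrableOn_empty
    · exact ((hc₃.mono (fun u hu => hu.1)).integrableOn_Icc).mono_set Ioc_subset_Icc_self
  have hnorm : Tendsto (fun i : ℝ => ∫ s in (0:ℝ)..i, ‖x₃ s‖) atTop
      (𝓝 ((n 0 - M) / γnom)) := by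
    refine hFtend.congr' ?_
    filter_upwards [eventually_ge_atTop (0:ℝ)] with t ht
    simp only [hFdef]
    apply integral_congr
    intro s hs
    rw [uIcc_of_le ht] at hs
    exact (Real.norm_of_nonneg (hnn s hs.1).2.2).symm
  have hInt : IntegrableOn x₃ (Ioi 0) :=
    integrableOn_Ioi_of_intervalIntegral_norm_tendsto ((n 0 - M) / γnom) 0
      (fun i => hx3int i) tendsto_id hnorm
  have hIoi : Tendsto F atTop (𝓝 (∫ s in Ioi (0:ℝ), x₃ s)) :=
    intervalIntegral_tendsto_integral_Ioi 0 hInt tendsto_id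
  have hval : ∫ s in Ioi (0:ℝ), x₃ s = (n 0 - M) / γnom := tendsto_nhds_unique hIoi hFtend
  -- the limit of the tail mass is zero
  have hL : L = 0 := by
    by_contra hLne
    have hLpos : 0 < L := lt_of_le_of_ne hL0 (Ne.symm hLne)
    have hn00 : 0 ≤ n 0 := hnnn 0 le_rfl
    set C : ℝ := 2 * n 0 / η + n 0 / γnom with hCdef
    have hC0 : 0 ≤ C :=
      add_nonneg (div_nonneg (by linarith) hη.le) (div_nonneg hn00 hγn.le)
    have hbound : ∀ t : ℝ, 0 ≤ t → L * t ≤ C := by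
      intro t ht
      have e3 := hi₃' t ht
      have i2 : IntervalIntegrable x₂ volume 0 t := myIntervalIntegrable hc₂ le_rfl ht
      have i3 : IntervalIntegrable x₃ volume 0 t := myIntervalIntegrable hc₃ le_rfl ht
      have hsplit : (∫ s in (0:ℝ)..t, (η * x₂ s - γnom * x₃ s)) =
          η * (∫ s in (0:ℝ)..t, x₂ s) - γnom * F t := by
        rw [integral_sub (i2.const_mul η) (i3.const_mul γnom),
          intervalIntegral.integral_const_mul, intervalIntegral.integral_const_mul]
      have hFb : γnom * F t ≤ n 0 := by
        have h5 := hFn t ht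
        have h6 := hnnn t ht
        linarith
      have hFnn : 0 ≤ F t := integral_nonneg ht (fun s hs => (hnn s hs.1).2.2)
      have hx3le : x₃ t ≤ n t := by
        obtain ⟨p1, p2, p3⟩ := hnn t ht
        simp only [hndef]
        linarith
      have hx3le' : x₃ t ≤ n 0 := hx3le.trans (hnanti 0 t le_rfl ht)
      have hc00 : 0 ≤ x₃ 0 := by rw [hc]; exact hc0
      have hIx2 : η * (∫ s in (0:ℝ)..t, x₂ s) ≤ 2 * n 0 := by
        have h7 : η * (∫ s in (0:ℝ)..t, x₂ s) = x₃ t - x₃ 0 + γnom * F t := by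
          linarith [e3, hsplit]
        linarith
      have hIx2' : (∫ s in (0:ℝ)..t, x₂ s) ≤ 2 * n 0 / η :=
        (le_div_iff₀ hη).mpr (by linarith [hIx2])
      have hFb' : F t ≤ n 0 / γnom := (le_div_iff₀ hγn).mpr (by linarith [hFb])
      have hmono := integral_mono_on ht intervalIntegrable_const (i2.add i3)
        (fun u hu => hLle u hu.1)
      rw [intervalIntegral.integral_const] at hmono
      have hLw : L * t ≤ ∫ s in (0:ℝ)..t, w s := by
        have h8 : (t - 0) • L = L * t := by rw [smul_eq_mul]; ring
        rw [h8] at hmono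
        exact hmono
      have hWsplit : (∫ s in (0:ℝ)..t, w s) =
          (∫ s in (0:ℝ)..t, x₂ s) + F t := by
        simp only [hwdef, hFdef]
        exact integral_add i2 i3
      rw [hCdef]
      linarith
    have ht' : (0:ℝ) ≤ (C + 1) / L := div_nonneg (by linarith) hLpos.le
    have h9 := hbound ((C + 1) / L) ht'
    rw [mul_comm, div_mul_cancel₀ _ (ne_of_gt hLpos)] at h9
    linarith
  refine ⟨M, ?_, hInt, ?_⟩
  · have h10 := hMt.sub hLt
    rw [hL, sub_zero] at h10
    refine h10.congr (fun t => ?_)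
    simp only [hndef, hwdef]
    ring
  · rw [hval]
    have hn0 : n 0 = a + b + c := by
      simp only [hndef]
      rw [ha, hb, hc]
    rw [hn0]
    ring_nf
end
end

section
/- For every initial state x⁰ ∈ X, every control u, and every δ > 0, the finite-horizon cost satisfies ∫₀^δ ℓ(x(s; x⁰, u), u(s)) ds ≥ e^{−2δ·max{η, γ_max}} · δ · λ ((x₂⁰)² + (x₃⁰)²); consequently δ ℓ*(x⁰) ≤ e^{2δ·max{η, γ_max}} V_δ(x⁰). -/
set_option maxHeartbeats 1000000


open MeasureTheory Set Filter Topology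
open scoped ENNReal

noncomputable section

/-- Interval integrability of a product of a bounded measurable function with a function
continuous on `Ici 0`. -/
lemma intInt_mul {u x : ℝ → ℝ} {β B s t : ℝ} (hs : 0 ≤ s) (hst : s ≤ t)
    (hu : Measurable u) (hx : ContinuousOn x (Ici 0))
    (hub : ∀ r, 0 ≤ r → |u r| ≤ β) (hxb : ∀ r ∈ Icc s t, |x r| ≤ B) :
    IntervalIntegrable (fun r => u r * x r) volume s t := by
  rw [intervalIntegrable_iff_integrableOn_Ioc_of_le hst]
  have hxm : AEStronglyMeasurable x (volume.restrict (Ioc s t)) :=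
    (hx.mono (fun r hr => le_trans hs hr.1.le)).aestronglyMeasurable measurableSet_Ioc
  have hum : AEStronglyMeasurable u (volume.restrict (Ioc s t)) :=
    hu.aestronglyMeasurable.restrict
  refine Integrable.mono' (integrable_const (β * B)) (hum.mul hxm) ?_
  filter_upwards [ae_restrict_mem measurableSet_Ioc] with r hr
  have h1 := hub r (le_trans hs hr.1.le)
  have h2 := hxb r (Ioc_subset_Icc_self hr)
  rw [Real.norm_eq_abs, abs_mul]
  exact mul_le_mul h1 h2 (abs_nonneg _) ((abs_nonneg _).trans h1)

/-- Lower Grönwall estimate in integral form: if `y` is continuous on `[0,T]` and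
`y t - y s ≥ -κ ∫_s^t y` for all `0 ≤ s ≤ t ≤ T`, then `y t ≥ y 0 e^{-κ t}`. -/
lemma gronwall_lower {y : ℝ → ℝ} {κ T : ℝ} (hκ : 0 < κ)
    (hy : ContinuousOn y (Icc 0 T))
    (hineq : ∀ s t : ℝ, 0 ≤ s → s ≤ t → t ≤ T →
      -κ * ∫ r in s..t, y r ≤ y t - y s) :
    ∀ t ∈ Icc (0:ℝ) T, y 0 * Real.exp (-κ * t) ≤ y t := by
  intro t ht
  rcases eq_or_lt_of_le ht.1 with h0t | h0t
  · rw [← h0t]; simp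
  have hyIcc : ContinuousOn y (Icc 0 t) := hy.mono (Icc_subset_Icc le_rfl ht.2)
  have hyint : ∀ s₁ s₂ : ℝ, 0 ≤ s₁ → s₁ ≤ s₂ → s₂ ≤ t →
      IntervalIntegrable y volume s₁ s₂ := by
    intro s₁ s₂ h1 h2 h3
    refine ContinuousOn.intervalIntegrable ?_
    rw [uIcc_of_le h2]
    exact hyIcc.mono (Icc_subset_Icc h1 h3)
  set Z : ℝ → ℝ := fun s => ∫ r in (0:ℝ)..s, y r with hZ
  have hZcont : ContinuousOn Z (Icc 0 t) := by
    have h1 : IntegrableOn y (uIcc 0 t) := by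
      rw [uIcc_of_le ht.1]; exact hyIcc.integrableOn_Icc
    simpa [hZ, uIcc_of_le ht.1] using intervalIntegral.continuousOn_primitive_interval h1
  have hZder : ∀ s ∈ Ioo (0:ℝ) t, HasDerivAt Z (y s) s := by
    intro s hs
    have hcAt : ContinuousAt y s :=
      hy.continuousAt (Icc_mem_nhds hs.1 (lt_of_lt_of_le hs.2 ht.2))
    refine intervalIntegral.integral_hasDerivAt_right
      (hyint 0 s le_rfl hs.1.le hs.2.le) ?_ hcAt
    exact ContinuousOn.stronglyMeasurableAtFilter isOpen_Ioo
      (hy.mono (fun r hr => ⟨hr.1.le, hr.2.le.trans ht.2⟩)) s hs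
  -- H s = exp (κ s) * (Z t - Z s) + exp (κ s) * (y t / κ) is monotone on [0, t]
  set H : ℝ → ℝ := fun s => Real.exp (κ * s) * (Z t - Z s) + Real.exp (κ * s) * (y t / κ)
    with hH
  have hHder : ∀ s ∈ Ioo (0:ℝ) t, HasDerivAt H
      ((Real.exp (κ * s) * (κ * 1)) * (Z t - Z s) + Real.exp (κ * s) * (-(y s))
        + (Real.exp (κ * s) * (κ * 1)) * (y t / κ)) s := by
    intro s hs
    have he : HasDerivAt (fun r => Real.exp (κ * r)) (Real.exp (κ * s) * (κ * 1)) s :=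
      ((hasDerivAt_id s).const_mul κ).exp
    have hZs : HasDerivAt (fun r => Z t - Z r) (-(y s)) s := (hZder s hs).const_sub (Z t)
    exact (he.mul hZs).add (he.mul_const (y t / κ))
  have hHcont : ContinuousOn H (Icc 0 t) := by
    have hec : Continuous fun s : ℝ => Real.exp (κ * s) :=
      Real.continuous_exp.comp (continuous_const.mul continuous_id)
    exact ((hec.continuousOn.mul (continuousOn_const.sub hZcont)).add
      (hec.continuousOn.mul continuousOn_const))
  have hmono : MonotoneOn H (Icc 0 t) := by
    refine monotoneOn_of_deriv_nonneg (convex_Icc 0 t) hHcont ?_ ?_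
    · intro s hs
      rw [interior_Icc] at hs
      exact ((hHder s hs).differentiableAt).differentiableWithinAt
    · intro s hs
      rw [interior_Icc] at hs
      rw [(hHder s hs).deriv]
      have hzst : ∫ r in s..t, y r = Z t - Z s := by
        rw [hZ]
        exact (intervalIntegral.integral_interval_sub_left
          (hyint 0 t le_rfl ht.1 le_rfl) (hyint 0 s le_rfl hs.1.le hs.2.le)).symm
      have hin := hineq s t hs.1.le hs.2.le ht.2
      rw [hzst] at hin
      have hfield : (Real.exp (κ * s) * (κ * 1)) * (y t / κ) = Real.exp (κ * s) * y t := by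
        field_simp
      rw [hfield]
      have hpos := Real.exp_pos (κ * s)
      nlinarith [mul_le_mul_of_nonneg_left hin hpos.le]
  have hZt0 : Z 0 = 0 := intervalIntegral.integral_same
  have h01 : H 0 ≤ H t :=
    hmono ⟨le_rfl, h0t.le⟩ ⟨h0t.le, le_rfl⟩ h0t.le
  have hH0 : H 0 = Z t + y t / κ := by simp [hH, hZt0]
  have hHt : H t = Real.exp (κ * t) * (y t / κ) := by simp [hH]
  -- κ Z t ≤ y t * (exp (κ t) - 1)
  have hZbound : κ * Z t ≤ y t * (Real.exp (κ * t) - 1) := by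
    rw [hH0, hHt] at h01
    have : Z t ≤ Real.exp (κ * t) * (y t / κ) - y t / κ := by linarith
    calc κ * Z t ≤ κ * (Real.exp (κ * t) * (y t / κ) - y t / κ) :=
          mul_le_mul_of_nonneg_left this hκ.le
      _ = y t * (Real.exp (κ * t) - 1) := by field_simp
  have hin0 := hineq 0 t le_rfl ht.1 ht.2
  have hZt : ∫ r in (0:ℝ)..t, y r = Z t := rfl
  rw [hZt] at hin0
  -- y 0 ≤ y t * exp (κ t)
  have hy0 : y 0 ≤ y t * Real.exp (κ * t) := by nlinarith
  have hexp : Real.exp (-κ * t) * Real.exp (κ * t) = 1 := by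
    rw [← Real.exp_add]; ring_nf; exact Real.exp_zero
  have hep := Real.exp_pos (-κ * t)
  calc y 0 * Real.exp (-κ * t) ≤ (y t * Real.exp (κ * t)) * Real.exp (-κ * t) :=
        mul_le_mul_of_nonneg_right hy0 hep.le
    _ = y t * (Real.exp (-κ * t) * Real.exp (κ * t)) := by ring
    _ = y t := by rw [hexp, mul_one]

/-- Nonnegativity of SEIR trajectories on `[0, δ]` for nonnegative initial data. -/
lemma seir_nonneg_s10 {η βmin βnom γnom γmax : ℝ}
    (hη : 0 < η) (hβm : 0 < βmin) (hβ : βmin < βnom) (hγn : 0 < γnom) (hγ : γnom < γmax)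
    {u₁ u₂ x₁ x₂ x₃ : ℝ → ℝ}
    (hu : IsCtrl βmin βnom γnom γmax u₁ u₂) (hx : IsTraj η u₁ u₂ x₁ x₂ x₃)
    (h10 : 0 ≤ x₁ 0) (h20 : 0 ≤ x₂ 0) (h30 : 0 ≤ x₃ 0)
    {δ : ℝ} (hδ : 0 < δ) :
    ∀ t ∈ Icc (0:ℝ) δ, 0 ≤ x₁ t ∧ 0 ≤ x₂ t ∧ 0 ≤ x₃ t := by
  obtain ⟨hm1, hm2, hbox⟩ := hu
  obtain ⟨hc1, hc2, hc3, hr1, hr2, hr3⟩ := hx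
  -- bound on the trajectory over [0, δ]
  obtain ⟨B1, hB1⟩ := isCompact_Icc.exists_bound_of_continuousOn
    (hc1.mono (Icc_subset_Ici_self (a := δ) (b := (0:ℝ))))
  obtain ⟨B2, hB2⟩ := isCompact_Icc.exists_bound_of_continuousOn
    (hc2.mono (Icc_subset_Ici_self (a := δ) (b := (0:ℝ))))
  obtain ⟨B3, hB3⟩ := isCompact_Icc.exists_bound_of_continuousOn
    (hc3.mono (Icc_subset_Ici_self (a := δ) (b := (0:ℝ))))
  set B : ℝ := max B1 (max B2 B3) with hBdef
  have hB : ∀ r ∈ Icc (0:ℝ) δ, |x₁ r| ≤ B ∧ |x₂ r| ≤ B ∧ |x₃ r| ≤ B := by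
    intro r hr
    refine ⟨le_trans ?_ (le_max_left _ _), le_trans ?_ ((le_max_left _ _).trans (le_max_right _ _)),
      le_trans ?_ ((le_max_right _ _).trans (le_max_right _ _))⟩
    · simpa [Real.norm_eq_abs] using hB1 r hr
    · simpa [Real.norm_eq_abs] using hB2 r hr
    · simpa [Real.norm_eq_abs] using hB3 r hr
  have hB0 : 0 ≤ B := le_trans (abs_nonneg _) (hB 0 ⟨le_rfl, hδ.le⟩).1
  set K : ℝ := βnom * B + η with hKdef
  have hKpos : 0 < K := by nlinarith
  -- bounds on the controls
  have hu1b : ∀ r : ℝ, 0 ≤ r → |u₁ r| ≤ βnom := by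
    intro r hr
    have h := (hbox r hr).1
    rw [abs_le]
    exact ⟨by linarith [h.1], h.2⟩
  have hu2b : ∀ r : ℝ, 0 ≤ r → |u₂ r| ≤ γmax := by
    intro r hr
    have h := (hbox r hr).2
    rw [abs_le]
    exact ⟨by linarith [h.1, hγn, hγ], h.2⟩
  -- integrability of continuous functions
  have hcint : ∀ f : ℝ → ℝ, ContinuousOn f (Ici 0) → ∀ s t : ℝ, 0 ≤ s → s ≤ t →
      IntervalIntegrable f volume s t := by
    intro f hf s t h1 h2
    refine ContinuousOn.intervalIntegrable ?_
    rw [uIcc_of_le h2]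
    exact hf.mono fun r hr => le_trans h1 hr.1
  have hx13 : ContinuousOn (fun r => x₁ r * x₃ r) (Ici (0:ℝ)) := hc1.mul hc3
  have hprodb : ∀ r ∈ Icc (0:ℝ) δ, |x₁ r * x₃ r| ≤ B * B := by
    intro r hr
    rw [abs_mul]
    exact mul_le_mul (hB r hr).1 (hB r hr).2.2 (abs_nonneg _) hB0
  have htriple : ∀ s t : ℝ, 0 ≤ s → s ≤ t → t ≤ δ →
      IntervalIntegrable (fun r => u₁ r * x₁ r * x₃ r) volume s t := by
    intro s t h1 h2 h3
    have h := intInt_mul h1 h2 hm1 hx13 hu1b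
      (fun r hr => hprodb r (Icc_subset_Icc h1 h3 hr))
    simpa [mul_assoc] using h
  have hint1 : ∀ s t : ℝ, 0 ≤ s → s ≤ t → t ≤ δ →
      IntervalIntegrable (fun r => -(u₁ r * x₁ r * x₃ r)) volume s t :=
    fun s t h1 h2 h3 => (htriple s t h1 h2 h3).neg
  have hint2 : ∀ s t : ℝ, 0 ≤ s → s ≤ t → t ≤ δ →
      IntervalIntegrable (fun r => u₁ r * x₁ r * x₃ r - η * x₂ r) volume s t :=
    fun s t h1 h2 h3 => (htriple s t h1 h2 h3).sub
      (hcint (fun r => η * x₂ r) (continuousOn_const.mul hc2) s t h1 h2)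
  have hint3 : ∀ s t : ℝ, 0 ≤ s → s ≤ t → t ≤ δ →
      IntervalIntegrable (fun r => η * x₂ r - u₂ r * x₃ r) volume s t := by
    intro s t h1 h2 h3
    exact (hcint (fun r => η * x₂ r) (continuousOn_const.mul hc2) s t h1 h2).sub
      (intInt_mul h1 h2 hm2 hc3 hu2b (fun r hr => (hB r (Icc_subset_Icc h1 h3 hr)).2.2))
  -- the total negative part and its primitive
  set n : ℝ → ℝ := fun r => max (-(x₁ r)) 0 + (max (-(x₂ r)) 0 + max (-(x₃ r)) 0) with hn
  have hncont : ContinuousOn n (Ici (0:ℝ)) :=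
    (hc1.neg.sup continuousOn_const).add
      ((hc2.neg.sup continuousOn_const).add (hc3.neg.sup continuousOn_const))
  have hn0 : ∀ r : ℝ, 0 ≤ n r := by
    intro r
    have := le_max_right (-(x₁ r)) 0
    have := le_max_right (-(x₂ r)) 0
    have := le_max_right (-(x₃ r)) 0
    simp only [hn]
    linarith
  have hKn : ContinuousOn (fun r => K * n r) (Ici (0:ℝ)) := continuousOn_const.mul hncont
  set N : ℝ → ℝ := fun t => ∫ r in (0:ℝ)..t, n r with hN
  have hNcont : ContinuousOn N (Icc 0 δ) := by
    have h1 : IntegrableOn n (uIcc 0 δ) := by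
      rw [uIcc_of_le hδ.le]
      exact (hncont.mono Icc_subset_Ici_self).integrableOn_Icc
    simpa [hN, uIcc_of_le hδ.le] using intervalIntegral.continuousOn_primitive_interval h1
  have hN0 : ∀ t ∈ Icc (0:ℝ) δ, 0 ≤ N t :=
    fun t ht => intervalIntegral.integral_nonneg ht.1 fun r _ => hn0 r
  -- crossing argument: generic single-component estimate
  have crossing : ∀ z F : ℝ → ℝ, ContinuousOn z (Ici 0) → 0 ≤ z 0 →
      (∀ s t : ℝ, 0 ≤ s → s ≤ t → t ≤ δ → IntervalIntegrable F volume s t) →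
      (∀ t : ℝ, 0 ≤ t → z t = z 0 + ∫ r in (0:ℝ)..t, F r) →
      (∀ r ∈ Ioc (0:ℝ) δ, z r ≤ 0 → -(F r) ≤ K * n r) →
      ∀ t ∈ Icc (0:ℝ) δ, max (-(z t)) 0 ≤ K * N t := by
    intro z F hzc hz0 hFint hrep hpt t ht
    rcases le_or_gt 0 (z t) with h | h
    · rw [max_eq_right (neg_nonpos.2 h)]
      exact mul_nonneg hKpos.le (hN0 t ht)
    · have hzIcc : ContinuousOn z (Icc 0 t) := hzc.mono Icc_subset_Ici_self
      set S : Set ℝ := Icc 0 t ∩ z ⁻¹' Ici 0 with hS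
      have hSne : S.Nonempty := ⟨0, ⟨le_rfl, ht.1⟩, by simpa using hz0⟩
      have hSclosed : IsClosed S :=
        hzIcc.preimage_isClosed_of_isClosed isClosed_Icc isClosed_Ici
      have hScpt : IsCompact S := isCompact_Icc.of_isClosed_subset hSclosed inter_subset_left
      set σ : ℝ := sSup S with hσdef
      have hσS : σ ∈ S := hScpt.sSup_mem hSne
      obtain ⟨⟨hσ0, hσt⟩, hzσ⟩ := hσS
      rw [mem_preimage, mem_Ici] at hzσ
      have hσlt : σ < t := by
        rcases lt_or_eq_of_le hσt with h' | h'
        · exact h'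
        · rw [h'] at hzσ; linarith
      have hneg : ∀ r ∈ Ioc σ t, z r ≤ 0 := by
        intro r hr
        by_contra hpos
        push_neg at hpos
        have hrS : r ∈ S := ⟨⟨le_trans hσ0 hr.1.le, hr.2⟩, le_of_lt hpos⟩
        exact absurd (le_csSup hScpt.bddAbove hrS) (not_le.2 hr.1)
      have hrept : z t - z σ = ∫ r in σ..t, F r := by
        calc z t - z σ = (∫ r in (0:ℝ)..t, F r) - ∫ r in (0:ℝ)..σ, F r := by
              rw [hrep t ht.1, hrep σ hσ0]; ring
          _ = ∫ r in σ..t, F r := intervalIntegral.integral_interval_sub_left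
              (hFint 0 t le_rfl ht.1 ht.2) (hFint 0 σ le_rfl hσ0 (hσt.trans ht.2))
      have hmono : ∫ r in σ..t, (-(F r)) ≤ ∫ r in σ..t, K * n r := by
        rw [intervalIntegral.integral_of_le hσlt.le, intervalIntegral.integral_of_le hσlt.le]
        refine setIntegral_mono_on ?_ ?_ measurableSet_Ioc ?_
        · exact (intervalIntegrable_iff_integrableOn_Ioc_of_le hσlt.le).1
            ((hFint σ t hσ0 hσlt.le ht.2).neg)
        · exact (intervalIntegrable_iff_integrableOn_Ioc_of_le hσlt.le).1
            (hcint (fun r => K * n r) hKn σ t hσ0 hσlt.le)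
        · intro r hr
          exact hpt r ⟨lt_of_le_of_lt hσ0 hr.1, hr.2.trans ht.2⟩ (hneg r hr)
      have hsplit : ∫ r in σ..t, K * n r ≤ K * N t := by
        have hadd := intervalIntegral.integral_add_adjacent_intervals
          (hcint (fun r => K * n r) hKn 0 σ le_rfl hσ0)
          (hcint (fun r => K * n r) hKn σ t hσ0 hσlt.le)
        have hpos0 : 0 ≤ ∫ r in (0:ℝ)..σ, K * n r :=
          intervalIntegral.integral_nonneg hσ0 fun r _ => mul_nonneg hKpos.le (hn0 r)
        have hKN : ∫ r in (0:ℝ)..t, K * n r = K * N t := by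
          rw [hN]; exact intervalIntegral.integral_const_mul K n
        linarith
      have hfin : -(z t) ≤ K * N t := by
        have h2 : -(z t - z σ) = ∫ r in σ..t, (-(F r)) := by
          rw [hrept, intervalIntegral.integral_neg]
        have h3 : -(z t) ≤ -(z t - z σ) := by linarith
        linarith
      rw [max_eq_left (by linarith : (0:ℝ) ≤ -(z t))]
      exact hfin
  -- the three pointwise estimates
  have hcross1 : ∀ t ∈ Icc (0:ℝ) δ, max (-(x₁ t)) 0 ≤ K * N t := by
    refine crossing x₁ (fun r => -(u₁ r * x₁ r * x₃ r)) hc1 h10 hint1 hr1 ?_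
    intro r hr hz
    have hu1 := (hbox r hr.1.le).1
    have hb1 := abs_le.1 (hB r (Ioc_subset_Icc_self hr)).1
    have hb3 := abs_le.1 (hB r (Ioc_subset_Icc_self hr)).2.2
    have hm1 := le_max_right (-(x₁ r)) 0
    have hm2 := le_max_right (-(x₂ r)) 0
    have hm3l := le_max_left (-(x₃ r)) 0
    have hm3r := le_max_right (-(x₃ r)) 0
    have hmn : max (-(x₃ r)) 0 ≤ n r := by simp only [hn]; linarith
    have hstep : u₁ r * x₁ r * x₃ r ≤ (βnom * B) * max (-(x₃ r)) 0 := by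
      rcases le_or_gt (x₃ r) 0 with h3 | h3
      · rw [max_eq_left (by linarith : (0:ℝ) ≤ -(x₃ r))]
        have hup : u₁ r * (-(x₁ r)) ≤ βnom * B :=
          mul_le_mul hu1.2 (by linarith) (by linarith) (by linarith)
        calc u₁ r * x₁ r * x₃ r = (u₁ r * (-(x₁ r))) * (-(x₃ r)) := by ring
          _ ≤ (βnom * B) * (-(x₃ r)) := mul_le_mul_of_nonneg_right hup (by linarith)
      · have h1 : u₁ r * x₁ r ≤ 0 := mul_nonpos_of_nonneg_of_nonpos (by linarith [hu1.1]) hz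
        have h2 : u₁ r * x₁ r * x₃ r ≤ 0 := mul_nonpos_of_nonpos_of_nonneg h1 h3.le
        have h4 : 0 ≤ (βnom * B) * max (-(x₃ r)) 0 :=
          mul_nonneg (by nlinarith) hm3r
        linarith
    have hKn' : (βnom * B) * max (-(x₃ r)) 0 ≤ K * n r :=
      mul_le_mul (by rw [hKdef]; linarith) hmn hm3r hKpos.le
    simp only [neg_neg]
    linarith
  have hcross2 : ∀ t ∈ Icc (0:ℝ) δ, max (-(x₂ t)) 0 ≤ K * N t := by
    refine crossing x₂ (fun r => u₁ r * x₁ r * x₃ r - η * x₂ r) hc2 h20 hint2 hr2 ?_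
    intro r hr hz
    have hu1 := (hbox r hr.1.le).1
    have hb1 := abs_le.1 (hB r (Ioc_subset_Icc_self hr)).1
    have hb3 := abs_le.1 (hB r (Ioc_subset_Icc_self hr)).2.2
    have hm1l := le_max_left (-(x₁ r)) 0
    have hm1r := le_max_right (-(x₁ r)) 0
    have hm2r := le_max_right (-(x₂ r)) 0
    have hm3l := le_max_left (-(x₃ r)) 0
    have hm3r := le_max_right (-(x₃ r)) 0
    have hmn : max (-(x₁ r)) 0 + max (-(x₃ r)) 0 ≤ n r := by simp only [hn]; linarith
    have hstep : -(u₁ r * x₁ r * x₃ r) ≤ (βnom * B) * (max (-(x₁ r)) 0 + max (-(x₃ r)) 0) := by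
      have hRHS : 0 ≤ (βnom * B) * (max (-(x₁ r)) 0 + max (-(x₃ r)) 0) :=
        mul_nonneg (by nlinarith) (by linarith)
      rcases le_or_gt (x₁ r) 0 with h1 | h1
      · rcases le_or_gt (x₃ r) 0 with h3 | h3
        · have hpp : 0 ≤ u₁ r * (-(x₁ r)) * (-(x₃ r)) :=
            mul_nonneg (mul_nonneg (by linarith [hu1.1]) (by linarith)) (by linarith)
          have heq : u₁ r * x₁ r * x₃ r = u₁ r * (-(x₁ r)) * (-(x₃ r)) := by ring
          linarith
        · have e1 : u₁ r * (-(x₁ r)) * x₃ r ≤ u₁ r * (-(x₁ r)) * B :=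
            mul_le_mul_of_nonneg_left hb3.2
              (mul_nonneg (by linarith [hu1.1]) (by linarith))
          have e2 : u₁ r * (-(x₁ r)) * B ≤ βnom * (-(x₁ r)) * B :=
            mul_le_mul_of_nonneg_right
              (mul_le_mul_of_nonneg_right hu1.2 (by linarith)) hB0
          have e3 : (βnom * B) * (-(x₁ r)) ≤ (βnom * B) * (max (-(x₁ r)) 0 + max (-(x₃ r)) 0) :=
            mul_le_mul_of_nonneg_left (by linarith) (mul_nonneg (by linarith) hB0)
          have heq : -(u₁ r * x₁ r * x₃ r) = u₁ r * (-(x₁ r)) * x₃ r := by ring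
          have heq2 : βnom * (-(x₁ r)) * B = (βnom * B) * (-(x₁ r)) := by ring
          linarith
      · rcases le_or_gt (x₃ r) 0 with h3 | h3
        · have e1 : u₁ r * (-(x₃ r)) * x₁ r ≤ u₁ r * (-(x₃ r)) * B :=
            mul_le_mul_of_nonneg_left hb1.2
              (mul_nonneg (by linarith [hu1.1]) (by linarith))
          have e2 : u₁ r * (-(x₃ r)) * B ≤ βnom * (-(x₃ r)) * B :=
            mul_le_mul_of_nonneg_right
              (mul_le_mul_of_nonneg_right hu1.2 (by linarith)) hB0
          have e3 : (βnom * B) * (-(x₃ r)) ≤ (βnom * B) * (max (-(x₁ r)) 0 + max (-(x₃ r)) 0) :=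
            mul_le_mul_of_nonneg_left (by linarith) (mul_nonneg (by linarith) hB0)
          have heq : -(u₁ r * x₁ r * x₃ r) = u₁ r * (-(x₃ r)) * x₁ r := by ring
          have heq2 : βnom * (-(x₃ r)) * B = (βnom * B) * (-(x₃ r)) := by ring
          linarith
        · have hpp : 0 ≤ u₁ r * x₁ r * x₃ r :=
            mul_nonneg (mul_nonneg (by linarith [hu1.1]) h1.le) h3.le
          linarith
    have hKn' : (βnom * B) * (max (-(x₁ r)) 0 + max (-(x₃ r)) 0) ≤ K * n r :=
      mul_le_mul (by rw [hKdef]; linarith) hmn (by linarith) hKpos.le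
    have hη2 : η * x₂ r ≤ 0 := mul_nonpos_of_nonneg_of_nonpos hη.le hz
    have : -(u₁ r * x₁ r * x₃ r - η * x₂ r) = -(u₁ r * x₁ r * x₃ r) + η * x₂ r := by ring
    rw [this]
    linarith
  have hcross3 : ∀ t ∈ Icc (0:ℝ) δ, max (-(x₃ t)) 0 ≤ K * N t := by
    refine crossing x₃ (fun r => η * x₂ r - u₂ r * x₃ r) hc3 h30 hint3 hr3 ?_
    intro r hr hz
    have hu2 := (hbox r hr.1.le).2
    have hm1r := le_max_right (-(x₁ r)) 0
    have hm2l := le_max_left (-(x₂ r)) 0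
    have hm2r := le_max_right (-(x₂ r)) 0
    have hm3r := le_max_right (-(x₃ r)) 0
    have hmn : max (-(x₂ r)) 0 ≤ n r := by simp only [hn]; linarith
    have h1 : u₂ r * x₃ r ≤ 0 := mul_nonpos_of_nonneg_of_nonpos (by linarith [hu2.1]) hz
    have h2 : η * (-(x₂ r)) ≤ η * max (-(x₂ r)) 0 :=
      mul_le_mul_of_nonneg_left hm2l hη.le
    have h3 : η * max (-(x₂ r)) 0 ≤ K * n r :=
      mul_le_mul (by rw [hKdef]; nlinarith) hmn hm2r hKpos.le
    have : -(η * x₂ r - u₂ r * x₃ r) = η * (-(x₂ r)) + u₂ r * x₃ r := by ring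
    rw [this]
    linarith
  have hkey : ∀ t ∈ Icc (0:ℝ) δ, n t ≤ 3 * K * N t := by
    intro t ht
    have h1 := hcross1 t ht
    have h2 := hcross2 t ht
    have h3 := hcross3 t ht
    simp only [hn]
    linarith
  -- Grönwall: N ≤ 0, hence n ≡ 0
  have hNder : ∀ r ∈ Ioo (0:ℝ) δ, HasDerivAt N (n r) r := by
    intro r hr
    have hcAt : ContinuousAt n r := hncont.continuousAt (Ici_mem_nhds hr.1)
    exact intervalIntegral.integral_hasDerivAt_right (hcint n hncont 0 r le_rfl hr.1.le)
      (ContinuousOn.stronglyMeasurableAtFilter isOpen_Ioi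
        (hncont.mono Ioi_subset_Ici_self) r hr.1) hcAt
  set P : ℝ → ℝ := fun r => Real.exp (-(3 * K) * r) * N r with hP
  have hPder : ∀ r ∈ Ioo (0:ℝ) δ, HasDerivAt P
      ((Real.exp (-(3 * K) * r) * (-(3 * K) * 1)) * N r + Real.exp (-(3 * K) * r) * n r) r := by
    intro r hr
    exact (((hasDerivAt_id r).const_mul (-(3 * K))).exp).mul (hNder r hr)
  have hPanti : AntitoneOn P (Icc 0 δ) := by
    refine antitoneOn_of_deriv_nonpos (convex_Icc 0 δ) ?_ ?_ ?_
    · exact ((Real.continuous_exp.comp (continuous_const.mul continuous_id)).continuousOn).mul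
        hNcont
    · intro r hr
      rw [interior_Icc] at hr
      exact (hPder r hr).differentiableAt.differentiableWithinAt
    · intro r hr
      rw [interior_Icc] at hr
      rw [(hPder r hr).deriv]
      have h1 := hkey r (Ioo_subset_Icc_self hr)
      have h2 := Real.exp_pos (-(3 * K) * r)
      have h3 := hN0 r (Ioo_subset_Icc_self hr)
      nlinarith
  have hNle : ∀ t ∈ Icc (0:ℝ) δ, N t ≤ 0 := by
    intro t ht
    have hPle : P t ≤ P 0 := hPanti ⟨le_rfl, hδ.le⟩ ht ht.1
    have hP0 : P 0 = 0 := by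
      simp [hP, hN, intervalIntegral.integral_same]
    rw [hP0] at hPle
    simp only [hP] at hPle
    have he := Real.exp_pos (-(3 * K) * t)
    nlinarith
  intro t ht
  have hnle : n t ≤ 0 := by
    have := hkey t ht
    have h2 := hNle t ht
    nlinarith
  have hes : max (-(x₁ t)) 0 + (max (-(x₂ t)) 0 + max (-(x₃ t)) 0) ≤ 0 := hnle
  have e1l := le_max_left (-(x₁ t)) 0
  have e1r := le_max_right (-(x₁ t)) 0
  have e2l := le_max_left (-(x₂ t)) 0
  have e2r := le_max_right (-(x₂ t)) 0
  have e3l := le_max_left (-(x₃ t)) 0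
  have e3r := le_max_right (-(x₃ t)) 0
  exact ⟨by linarith, by linarith, by linarith⟩

/-- Exponential lower bound for the `x₂` and `x₃` components. -/
lemma seir_traj_lower {η βmin βnom γnom γmax : ℝ}
    (hη : 0 < η) (hβm : 0 < βmin) (hβ : βmin < βnom) (hγn : 0 < γnom) (hγ : γnom < γmax)
    {u₁ u₂ x₁ x₂ x₃ : ℝ → ℝ}
    (hu : IsCtrl βmin βnom γnom γmax u₁ u₂) (hx : IsTraj η u₁ u₂ x₁ x₂ x₃)
    (h10 : 0 ≤ x₁ 0) (h20 : 0 ≤ x₂ 0) (h30 : 0 ≤ x₃ 0)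
    {δ : ℝ} (hδ : 0 < δ) :
    ∀ t ∈ Icc (0:ℝ) δ,
      x₂ 0 * Real.exp (-(max η γmax) * t) ≤ x₂ t ∧
      x₃ 0 * Real.exp (-(max η γmax) * t) ≤ x₃ t := by
  have hnn := seir_nonneg_s10 hη hβm hβ hγn hγ hu hx h10 h20 h30 hδ
  obtain ⟨hm1, hm2, hbox⟩ := hu
  obtain ⟨hc1, hc2, hc3, hr1, hr2, hr3⟩ := hx
  set M : ℝ := max η γmax with hM
  have hMpos : 0 < M := lt_of_lt_of_le hη (le_max_left _ _)
  -- bounds and integrability, as before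
  obtain ⟨B1, hB1⟩ := isCompact_Icc.exists_bound_of_continuousOn
    (hc1.mono (Icc_subset_Ici_self (a := δ) (b := (0:ℝ))))
  obtain ⟨B3, hB3⟩ := isCompact_Icc.exists_bound_of_continuousOn
    (hc3.mono (Icc_subset_Ici_self (a := δ) (b := (0:ℝ))))
  set B : ℝ := max B1 B3 with hBdef
  have hB : ∀ r ∈ Icc (0:ℝ) δ, |x₁ r| ≤ B ∧ |x₃ r| ≤ B := by
    intro r hr
    have e1 := hB1 r hr
    have e3 := hB3 r hr
    rw [Real.norm_eq_abs] at e1 e3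
    exact ⟨le_trans e1 (le_max_left _ _), le_trans e3 (le_max_right _ _)⟩
  have hB0 : 0 ≤ B := le_trans (abs_nonneg _) (hB 0 ⟨le_rfl, hδ.le⟩).1
  have hu1b : ∀ r : ℝ, 0 ≤ r → |u₁ r| ≤ βnom := by
    intro r hr
    have h := (hbox r hr).1
    rw [abs_le]
    exact ⟨by linarith [h.1], h.2⟩
  have hu2b : ∀ r : ℝ, 0 ≤ r → |u₂ r| ≤ γmax := by
    intro r hr
    have h := (hbox r hr).2
    rw [abs_le]
    exact ⟨by linarith [h.1, hγn, hγ], h.2⟩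
  have hcint : ∀ f : ℝ → ℝ, ContinuousOn f (Ici 0) → ∀ s t : ℝ, 0 ≤ s → s ≤ t →
      IntervalIntegrable f volume s t := by
    intro f hf s t h1 h2
    refine ContinuousOn.intervalIntegrable ?_
    rw [uIcc_of_le h2]
    exact hf.mono fun r hr => le_trans h1 hr.1
  have hx13 : ContinuousOn (fun r => x₁ r * x₃ r) (Ici (0:ℝ)) := hc1.mul hc3
  have htriple : ∀ s t : ℝ, 0 ≤ s → s ≤ t → t ≤ δ →
      IntervalIntegrable (fun r => u₁ r * x₁ r * x₃ r) volume s t := by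
    intro s t h1 h2 h3
    have h := intInt_mul h1 h2 hm1 hx13 hu1b (fun r hr => by
      rw [abs_mul]
      exact mul_le_mul (hB r (Icc_subset_Icc h1 h3 hr)).1
        (hB r (Icc_subset_Icc h1 h3 hr)).2 (abs_nonneg _) hB0)
    simpa [mul_assoc] using h
  have hint2 : ∀ s t : ℝ, 0 ≤ s → s ≤ t → t ≤ δ →
      IntervalIntegrable (fun r => u₁ r * x₁ r * x₃ r - η * x₂ r) volume s t :=
    fun s t h1 h2 h3 => (htriple s t h1 h2 h3).sub
      (hcint (fun r => η * x₂ r) (continuousOn_const.mul hc2) s t h1 h2)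
  have hint3 : ∀ s t : ℝ, 0 ≤ s → s ≤ t → t ≤ δ →
      IntervalIntegrable (fun r => η * x₂ r - u₂ r * x₃ r) volume s t := by
    intro s t h1 h2 h3
    exact (hcint (fun r => η * x₂ r) (continuousOn_const.mul hc2) s t h1 h2).sub
      (intInt_mul h1 h2 hm2 hc3 hu2b (fun r hr => (hB r (Icc_subset_Icc h1 h3 hr)).2))
  -- the generic integral inequality step
  have hstep : ∀ (z F : ℝ → ℝ), ContinuousOn z (Ici 0) →
      (∀ s t : ℝ, 0 ≤ s → s ≤ t → t ≤ δ → IntervalIntegrable F volume s t) →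
      (∀ t : ℝ, 0 ≤ t → z t = z 0 + ∫ r in (0:ℝ)..t, F r) →
      (∀ r ∈ Ioc (0:ℝ) δ, -M * z r ≤ F r) →
      ∀ s t : ℝ, 0 ≤ s → s ≤ t → t ≤ δ → -M * ∫ r in s..t, z r ≤ z t - z s := by
    intro z F hzc hFint hrep hpt s t h1 h2 h3
    have hrept : z t - z s = ∫ r in s..t, F r := by
      calc z t - z s = (∫ r in (0:ℝ)..t, F r) - ∫ r in (0:ℝ)..s, F r := by
            rw [hrep t (h1.trans h2), hrep s h1]; ring
        _ = ∫ r in s..t, F r := intervalIntegral.integral_interval_sub_left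
            (hFint 0 t le_rfl (h1.trans h2) h3) (hFint 0 s le_rfl h1 (h2.trans h3))
    have hmono : ∫ r in s..t, (-M * z r) ≤ ∫ r in s..t, F r := by
      rcases eq_or_lt_of_le h2 with h' | h'
      · rw [h']; simp
      rw [intervalIntegral.integral_of_le h2, intervalIntegral.integral_of_le h2]
      refine setIntegral_mono_on ?_ ?_ measurableSet_Ioc ?_
      · exact (intervalIntegrable_iff_integrableOn_Ioc_of_le h2).1
          (hcint (fun r => -M * z r) (continuousOn_const.mul hzc) s t h1 h2)
      · exact (intervalIntegrable_iff_integrableOn_Ioc_of_le h2).1 (hFint s t h1 h2 h3)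
      · intro r hr
        exact hpt r ⟨lt_of_le_of_lt h1 hr.1, hr.2.trans h3⟩
    rw [hrept]
    calc -M * ∫ r in s..t, z r = ∫ r in s..t, (-M * z r) := by
          rw [intervalIntegral.integral_const_mul]
      _ ≤ ∫ r in s..t, F r := hmono
  -- apply the lower Grönwall lemma to x₂ and x₃
  have hpt2 : ∀ r ∈ Ioc (0:ℝ) δ, -M * x₂ r ≤ u₁ r * x₁ r * x₃ r - η * x₂ r := by
    intro r hr
    obtain ⟨hn1, hn2, hn3⟩ := hnn r (Ioc_subset_Icc_self hr)
    have hu1 := (hbox r hr.1.le).1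
    have hprod : 0 ≤ u₁ r * x₁ r * x₃ r :=
      mul_nonneg (mul_nonneg (by linarith [hu1.1]) hn1) hn3
    have hηM : η * x₂ r ≤ M * x₂ r :=
      mul_le_mul_of_nonneg_right (le_max_left _ _) hn2
    linarith
  have hpt3 : ∀ r ∈ Ioc (0:ℝ) δ, -M * x₃ r ≤ η * x₂ r - u₂ r * x₃ r := by
    intro r hr
    obtain ⟨hn1, hn2, hn3⟩ := hnn r (Ioc_subset_Icc_self hr)
    have hu2 := (hbox r hr.1.le).2
    have hprod : 0 ≤ η * x₂ r := mul_nonneg hη.le hn2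
    have hγM : u₂ r * x₃ r ≤ M * x₃ r :=
      mul_le_mul_of_nonneg_right (le_trans hu2.2 (le_max_right _ _)) hn3
    linarith
  have hineq2 := hstep x₂ (fun r => u₁ r * x₁ r * x₃ r - η * x₂ r) hc2 hint2 hr2 hpt2
  have hineq3 := hstep x₃ (fun r => η * x₂ r - u₂ r * x₃ r) hc3 hint3 hr3 hpt3
  intro t ht
  exact ⟨gronwall_lower hMpos (hc2.mono Icc_subset_Ici_self) hineq2 t ht,
    gronwall_lower hMpos (hc3.mono Icc_subset_Ici_self) hineq3 t ht⟩

/-- lower bound on the finite-horizon cost and the resulting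
bound `δ ℓ*(x⁰) ≤ e^{2δ max{η,γmax}} V_δ(x⁰)`. -/
theorem finite_horizon_cost_lower_bound
    (η βmin βnom γnom γmax Imax lam : ℝ)
    (hη : 0 < η) (hβm : 0 < βmin) (hβ : βmin < βnom)
    (hγn : 0 < γnom) (hγ : γnom < γmax) (hIm : 0 < Imax) (hIm1 : Imax ≤ 1)
    (hlam : lam ∈ Ioc (0:ℝ) 1)
    (a b c : ℝ) (hX : InX Imax a b c)
    (δ : ℝ) (hδ : 0 < δ) :
    (∀ u₁ u₂ x₁ x₂ x₃ : ℝ → ℝ,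
      IsCtrl βmin βnom γnom γmax u₁ u₂ →
      IsTraj η u₁ u₂ x₁ x₂ x₃ →
      x₁ 0 = a → x₂ 0 = b → x₃ 0 = c →
      ENNReal.ofReal
          (Real.exp (-(2 * δ * max η γmax)) * (δ * (lam * (b ^ 2 + c ^ 2)))) ≤
        ∫⁻ s in Ioc (0:ℝ) δ,
          ENNReal.ofReal (stageCost lam βnom γnom (x₂ s) (x₃ s) (u₁ s) (u₂ s))) ∧
    ENNReal.ofReal (δ * (lam * (b ^ 2 + c ^ 2))) ≤
      ENNReal.ofReal (Real.exp (2 * δ * max η γmax)) *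
        Vfin η βmin βnom γnom γmax Imax lam δ a b c := by
  obtain ⟨⟨ha0, ha1⟩, ⟨hb0, hb1⟩, ⟨hc0, hc1⟩, hcI, hsum⟩ := hX
  set M : ℝ := max η γmax with hMdef
  have hMpos : 0 < M := lt_of_lt_of_le hη (le_max_left _ _)
  have hA : ∀ u₁ u₂ x₁ x₂ x₃ : ℝ → ℝ,
      IsCtrl βmin βnom γnom γmax u₁ u₂ →
      IsTraj η u₁ u₂ x₁ x₂ x₃ →
      x₁ 0 = a → x₂ 0 = b → x₃ 0 = c →
      ENNReal.ofReal
          (Real.exp (-(2 * δ * M)) * (δ * (lam * (b ^ 2 + c ^ 2)))) ≤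
        ∫⁻ s in Ioc (0:ℝ) δ,
          ENNReal.ofReal (stageCost lam βnom γnom (x₂ s) (x₃ s) (u₁ s) (u₂ s)) := by
    intro u₁ u₂ x₁ x₂ x₃ hu hx h1 h2 h3
    have h10 : 0 ≤ x₁ 0 := by rw [h1]; exact ha0
    have h20 : 0 ≤ x₂ 0 := by rw [h2]; exact hb0
    have h30 : 0 ≤ x₃ 0 := by rw [h3]; exact hc0
    have hlow := seir_traj_lower hη hβm hβ hγn hγ hu hx h10 h20 h30 hδ
    have hnn := seir_nonneg_s10 hη hβm hβ hγn hγ hu hx h10 h20 h30 hδ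
    set c₁ : ℝ := lam * ((b * Real.exp (-M * δ)) ^ 2 + (c * Real.exp (-M * δ)) ^ 2) with hc₁def
    have hc₁0 : 0 ≤ c₁ := mul_nonneg hlam.1.le (by positivity)
    have hpoint : ∀ s ∈ Ioc (0:ℝ) δ,
        c₁ ≤ stageCost lam βnom γnom (x₂ s) (x₃ s) (u₁ s) (u₂ s) := by
      intro s hs
      have hsIcc : s ∈ Icc (0:ℝ) δ := Ioc_subset_Icc_self hs
      obtain ⟨hl2, hl3⟩ := hlow s hsIcc
      obtain ⟨_, hn2, hn3⟩ := hnn s hsIcc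
      rw [h2] at hl2
      rw [h3] at hl3
      have hee : Real.exp (-M * δ) ≤ Real.exp (-M * s) := by
        apply Real.exp_le_exp.2
        nlinarith [hs.2, hMpos]
      have hb' : b * Real.exp (-M * δ) ≤ x₂ s :=
        le_trans (mul_le_mul_of_nonneg_left hee hb0) hl2
      have hc' : c * Real.exp (-M * δ) ≤ x₃ s :=
        le_trans (mul_le_mul_of_nonneg_left hee hc0) hl3
      have hb'0 : 0 ≤ b * Real.exp (-M * δ) := mul_nonneg hb0 (Real.exp_pos _).le
      have hc'0 : 0 ≤ c * Real.exp (-M * δ) := mul_nonneg hc0 (Real.exp_pos _).le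
      have hsq2 : (b * Real.exp (-M * δ)) ^ 2 ≤ (x₂ s) ^ 2 := by nlinarith
      have hsq3 : (c * Real.exp (-M * δ)) ^ 2 ≤ (x₃ s) ^ 2 := by nlinarith
      have hmain : c₁ ≤ lam * ((x₂ s) ^ 2 + (x₃ s) ^ 2) :=
        mul_le_mul_of_nonneg_left (by linarith) hlam.1.le
      have hrest : 0 ≤ (1 - lam) * ((u₁ s - βnom) ^ 2 + (u₂ s - γnom) ^ 2) :=
        mul_nonneg (by linarith [hlam.2]) (by positivity)
      rw [stageCost]
      linarith
    have hconst : Real.exp (-(2 * δ * M)) * (δ * (lam * (b ^ 2 + c ^ 2))) = c₁ * δ := by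
      rw [hc₁def]
      have he2 : Real.exp (-(2 * δ * M)) = Real.exp (-M * δ) * Real.exp (-M * δ) := by
        rw [← Real.exp_add]; ring_nf
      rw [he2]; ring
    calc ENNReal.ofReal (Real.exp (-(2 * δ * M)) * (δ * (lam * (b ^ 2 + c ^ 2))))
        = ENNReal.ofReal c₁ * ENNReal.ofReal δ := by
          rw [hconst, ENNReal.ofReal_mul hc₁0]
      _ = ENNReal.ofReal c₁ * volume (Ioc (0:ℝ) δ) := by
          rw [Real.volume_Ioc, sub_zero]
      _ = ∫⁻ _ in Ioc (0:ℝ) δ, ENNReal.ofReal c₁ := (setLIntegral_const _ _).symm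
      _ ≤ ∫⁻ s in Ioc (0:ℝ) δ,
            ENNReal.ofReal (stageCost lam βnom γnom (x₂ s) (x₃ s) (u₁ s) (u₂ s)) := by
          refine lintegral_mono_ae ?_
          refine (ae_restrict_iff' measurableSet_Ioc).2 (ae_of_all _ ?_)
          intro s hs
          exact ENNReal.ofReal_le_ofReal (hpoint s hs)
  refine ⟨hA, ?_⟩
  have hsInf : ENNReal.ofReal (Real.exp (-(2 * δ * M)) * (δ * (lam * (b ^ 2 + c ^ 2)))) ≤
      Vfin η βmin βnom γnom γmax Imax lam δ a b c := by
    rw [Vfin]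
    refine le_sInf ?_
    rintro J ⟨u₁, u₂, x₁, x₂, x₃, hu, hx, h1, h2, h3, -, rfl⟩
    exact hA u₁ u₂ x₁ x₂ x₃ hu hx h1 h2 h3
  have hcancel : Real.exp (2 * δ * M) * Real.exp (-(2 * δ * M)) = 1 := by
    rw [← Real.exp_add]; simp
  calc ENNReal.ofReal (δ * (lam * (b ^ 2 + c ^ 2)))
      = ENNReal.ofReal (Real.exp (2 * δ * M) *
          (Real.exp (-(2 * δ * M)) * (δ * (lam * (b ^ 2 + c ^ 2))))) := by
        have hq : Real.exp (2 * δ * M) *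
            (Real.exp (-(2 * δ * M)) * (δ * (lam * (b ^ 2 + c ^ 2)))) =
            δ * (lam * (b ^ 2 + c ^ 2)) := by
          rw [← mul_assoc, hcancel, one_mul]
        rw [hq]
    _ = ENNReal.ofReal (Real.exp (2 * δ * M)) *
          ENNReal.ofReal (Real.exp (-(2 * δ * M)) * (δ * (lam * (b ^ 2 + c ^ 2)))) :=
        ENNReal.ofReal_mul (Real.exp_pos _).le
    _ ≤ ENNReal.ofReal (Real.exp (2 * δ * M)) *
          Vfin η βmin βnom γnom γmax Imax lam δ a b c := mul_le_mul_right hsInf _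
end
end
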